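/- arXiv:1401.1940 — 9 statements merged into one kernel-verified Lean document; each statement's English description precedes it below -/
import Mathlib

section
/- If A is a real symmetric matrix whose underlying graph is a tree (i.e., the off-diagonal nonzero pattern of A forms a tree), then the largest eigenvalue of A has multiplicity 1; consequently the characteristic polynomial of A is not a square of a real polynomial. -/
open Polynomial

lemma charpoly_conj_aux {n : ℕ} (U M V : Matrix (Fin n) (Fin n) ℝ) (h1 : U * V = 1) :
    (U * M * V).charpoly = M.charpoly := by
  have h2 : V * U = 1 := mul_eq_one_comm.mp h1
  have key : (U * M * V).charmatrix = (U.map C) * M.charmatrix * (V.map C) := by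
    rw [Matrix.charmatrix, Matrix.charmatrix, Matrix.mul_sub, Matrix.sub_mul]
    congr 1
    · have hc := Matrix.scalar_commute (n := Fin n) (X : ℝ[X]) (fun r' => Commute.all _ _) (U.map C)
      calc Matrix.scalar (Fin n) (X : ℝ[X])
          = Matrix.scalar (Fin n) (X : ℝ[X]) * ((U * V).map C) := by
            rw [h1, Matrix.map_one C C.map_zero C.map_one, mul_one]
        _ = Matrix.scalar (Fin n) (X : ℝ[X]) * (U.map C * V.map C) := by rw [Matrix.map_mul]
        _ = U.map C * Matrix.scalar (Fin n) (X : ℝ[X]) * V.map C := by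
            rw [← mul_assoc, ← hc.eq]
    · rw [RingHom.mapMatrix_apply, RingHom.mapMatrix_apply, Matrix.map_mul, Matrix.map_mul]
  have hdet : ((U.map C) * (V.map C) : Matrix (Fin n) (Fin n) ℝ[X]).det = 1 := by
    rw [← Matrix.map_mul, h1, Matrix.map_one C C.map_zero C.map_one, Matrix.det_one]
  rw [Matrix.charpoly, Matrix.charpoly, key, Matrix.det_mul, Matrix.det_mul]
  rw [Matrix.det_mul] at hdet
  rw [mul_right_comm, hdet, one_mul]
open Polynomial Matrix

lemma herm_charpoly {n : ℕ} {B : Matrix (Fin n) (Fin n) ℝ} (hB : B.IsHermitian) :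
    B.charpoly = ∏ i, (X - C (hB.eigenvalues i)) := by
  have h1 := Matrix.mem_unitaryGroup_iff.mp hB.eigenvectorUnitary.2
  have := charpoly_conj_aux (hB.eigenvectorUnitary : Matrix (Fin n) (Fin n) ℝ)
    (Matrix.diagonal (RCLike.ofReal ∘ hB.eigenvalues))
    (star (hB.eigenvectorUnitary : Matrix (Fin n) (Fin n) ℝ)) h1
  have hs := hB.spectral_theorem
  simp only [Unitary.conjStarAlgAut_apply, Unitary.coe_star] at hs
  rw [← hs] at this
  rw [this, Matrix.charpoly_of_upperTriangular _ (Matrix.blockTriangular_diagonal _)]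
  simp

lemma dot_eigen {n : ℕ} {B : Matrix (Fin n) (Fin n) ℝ} (hB : B.IsHermitian) (i j : Fin n) :
    dotProduct ⇑(hB.eigenvectorBasis i) ⇑(hB.eigenvectorBasis j) =
      if i = j then 1 else 0 := by
  have h := (orthonormal_iff_ite.mp hB.eigenvectorBasis.orthonormal) i j
  simpa [PiLp.inner_apply, RCLike.inner_apply, conj_trivial, dotProduct, mul_comm] using h

lemma eigen_sum_repr {n : ℕ} {B : Matrix (Fin n) (Fin n) ℝ} (hB : B.IsHermitian)
    (x : Fin n → ℝ) :
    ∑ i, (dotProduct ⇑(hB.eigenvectorBasis i) x) • ⇑(hB.eigenvectorBasis i) = x := by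
  have h := hB.eigenvectorBasis.sum_repr (WithLp.toLp 2 x : EuclideanSpace ℝ (Fin n))
  have hr : ∀ i, hB.eigenvectorBasis.repr (WithLp.toLp 2 x : EuclideanSpace ℝ (Fin n)) i =
      dotProduct ⇑(hB.eigenvectorBasis i) x := by
    intro i
    rw [hB.eigenvectorBasis.repr_apply_apply]
    simp [PiLp.inner_apply, RCLike.inner_apply, conj_trivial, dotProduct, mul_comm]
  funext t
  have := congrFun (congrArg (fun (y : EuclideanSpace ℝ (Fin n)) => (y : Fin n → ℝ)) h) t
  simp only at this
  rw [← this]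
  simp only [← hr]
  rw [WithLp.ofLp_sum]
  rfl

lemma quad_eq {n : ℕ} {B : Matrix (Fin n) (Fin n) ℝ} (hB : B.IsHermitian) (x : Fin n → ℝ) :
    dotProduct x (B *ᵥ x) =
      ∑ i, hB.eigenvalues i * (dotProduct ⇑(hB.eigenvectorBasis i) x) ^ 2 ∧
    dotProduct x x = ∑ i, (dotProduct ⇑(hB.eigenvectorBasis i) x) ^ 2 := by
  set e := fun i => ⇑(hB.eigenvectorBasis i) with he
  set c := fun i => dotProduct (e i) x with hc
  have hx : ∑ i, c i • e i = x := eigen_sum_repr hB x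
  have hBx : B *ᵥ x = ∑ i, (c i * hB.eigenvalues i) • e i := by
    conv_lhs => rw [← hx]
    have h1 : B *ᵥ (∑ i, c i • e i) = ∑ i, c i • (B *ᵥ e i) := by
      simp only [← Matrix.mulVecLin_apply, map_sum, LinearMap.map_smul]
    rw [h1]
    refine Finset.sum_congr rfl fun i _ => ?_
    rw [he]
    rw [hB.mulVec_eigenvectorBasis i, smul_smul]
  have dsum : ∀ (u : Fin n → ℝ) (F : Fin n → (Fin n → ℝ)),
      dotProduct u (∑ i, F i) = ∑ i, dotProduct u (F i) := by
    intro u F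
    classical
    induction (Finset.univ : Finset (Fin n)) using Finset.induction_on with
    | empty => simp [dotProduct_zero]
    | insert _ _ hnot ih =>
      rw [Finset.sum_insert hnot, Finset.sum_insert hnot, dotProduct_add, ih]
  have dsum' : ∀ (u : Fin n → ℝ) (F : Fin n → (Fin n → ℝ)),
      dotProduct (∑ i, F i) u = ∑ i, dotProduct (F i) u := by
    intro u F
    rw [dotProduct_comm, dsum]
    exact Finset.sum_congr rfl fun i _ => dotProduct_comm _ _
  have hdot : ∀ f g : Fin n → ℝ,
      dotProduct (∑ i, f i • e i) (∑ j, g j • e j) = ∑ i, f i * g i := by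
    intro f g
    rw [dsum']
    refine Finset.sum_congr rfl fun i _ => ?_
    rw [smul_dotProduct, dsum]
    simp only [he, dotProduct_smul, dot_eigen hB, smul_eq_mul, mul_ite, mul_one, mul_zero]
    simp [Finset.sum_ite_eq]
  constructor
  · calc dotProduct x (B *ᵥ x)
        = ∑ i, c i * (c i * hB.eigenvalues i) := by rw [hBx, ← hx, hdot]
      _ = ∑ i, hB.eigenvalues i * (c i) ^ 2 := Finset.sum_congr rfl fun i _ => by ring
      _ = _ := by simp only [hc, he]
  · calc dotProduct x x
        = ∑ i, c i * c i := by rw [← hx, hdot]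
      _ = ∑ i, (c i) ^ 2 := Finset.sum_congr rfl fun i _ => by ring
      _ = _ := by simp only [hc, he]
open Polynomial Matrix

lemma eigen_mulVec_expand {n : ℕ} {B : Matrix (Fin n) (Fin n) ℝ} (hB : B.IsHermitian)
    (x : Fin n → ℝ) :
    B *ᵥ x = ∑ i, ((dotProduct ⇑(hB.eigenvectorBasis i) x) * hB.eigenvalues i) •
      ⇑(hB.eigenvectorBasis i) := by
  conv_lhs => rw [← eigen_sum_repr hB x]
  have h1 : B *ᵥ (∑ i, (dotProduct ⇑(hB.eigenvectorBasis i) x) • ⇑(hB.eigenvectorBasis i))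
      = ∑ i, (dotProduct ⇑(hB.eigenvectorBasis i) x) • (B *ᵥ ⇑(hB.eigenvectorBasis i)) := by
    simp only [← Matrix.mulVecLin_apply, map_sum, LinearMap.map_smul]
  rw [h1]
  refine Finset.sum_congr rfl fun i _ => ?_
  rw [hB.mulVec_eigenvectorBasis i, smul_smul]

lemma rayleigh_le {n : ℕ} {B : Matrix (Fin n) (Fin n) ℝ} (hB : B.IsHermitian)
    {μ : ℝ} (hμ : ∀ i, hB.eigenvalues i ≤ μ) (x : Fin n → ℝ) :
    dotProduct x (B *ᵥ x) ≤ μ * dotProduct x x := by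
  obtain ⟨h1, h2⟩ := quad_eq hB x
  rw [h1, h2, Finset.mul_sum]
  exact Finset.sum_le_sum fun i _ => mul_le_mul_of_nonneg_right (hμ i) (sq_nonneg _)

lemma rayleigh_eq {n : ℕ} {B : Matrix (Fin n) (Fin n) ℝ} (hB : B.IsHermitian)
    {μ : ℝ} (hμ : ∀ i, hB.eigenvalues i ≤ μ) (x : Fin n → ℝ)
    (hx : dotProduct x (B *ᵥ x) = μ * dotProduct x x) :
    B *ᵥ x = μ • x := by
  obtain ⟨h1, h2⟩ := quad_eq hB x
  set c := fun i => dotProduct ⇑(hB.eigenvectorBasis i) x with hc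
  have hzero : ∀ i, (μ - hB.eigenvalues i) * (c i) ^ 2 = 0 := by
    have hsum : ∑ i, (μ - hB.eigenvalues i) * (c i) ^ 2 = 0 := by
      have : ∑ i, (μ - hB.eigenvalues i) * (c i) ^ 2
          = μ * (∑ i, (c i) ^ 2) - ∑ i, hB.eigenvalues i * (c i) ^ 2 := by
        rw [Finset.mul_sum, ← Finset.sum_sub_distrib]
        exact Finset.sum_congr rfl fun i _ => by ring
      rw [this, ← h1, ← h2, ← hx, sub_self]
    intro i
    refine (Finset.sum_eq_zero_iff_of_nonneg fun i _ => ?_).mp hsum i (Finset.mem_univ i)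
    exact mul_nonneg (by linarith [hμ i]) (sq_nonneg _)
  have hcz : ∀ i, hB.eigenvalues i ≠ μ → c i = 0 := by
    intro i hne
    rcases mul_eq_zero.mp (hzero i) with h | h
    · exact absurd (by linarith [sub_eq_zero.mp h] : hB.eigenvalues i = μ) hne
    · exact pow_eq_zero_iff (by norm_num) |>.mp h
  rw [eigen_mulVec_expand hB x]
  conv_rhs => rw [← eigen_sum_repr hB x]
  rw [Finset.smul_sum]
  refine Finset.sum_congr rfl fun i _ => ?_
  rw [smul_smul]
  by_cases hev : hB.eigenvalues i = μ
  · rw [hev, mul_comm]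
  · have hz : dotProduct ⇑(hB.eigenvectorBasis i) x = 0 := hcz i hev
    rw [hz]; simp

lemma key_simple {n : ℕ} {B : Matrix (Fin n) (Fin n) ℝ} (hB : B.IsHermitian)
    (G : SimpleGraph (Fin n)) (hGc : G.Connected)
    (hpos : ∀ i j, G.Adj i j → 0 < B i j)
    (hnonneg : ∀ i j, i ≠ j → 0 ≤ B i j)
    {μ : ℝ} (hμ : ∀ i, hB.eigenvalues i ≤ μ)
    {i j : Fin n} (hi : hB.eigenvalues i = μ) (hj : hB.eigenvalues j = μ) : i = j := by
  by_contra hij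
  set vi := ⇑(hB.eigenvectorBasis i) with hvidef
  set vj := ⇑(hB.eigenvectorBasis j) with hvjdef
  have hvi : B *ᵥ vi = μ • vi := by rw [hvidef, hB.mulVec_eigenvectorBasis, hi]
  have hvj : B *ᵥ vj = μ • vj := by rw [hvjdef, hB.mulVec_eigenvectorBasis, hj]
  have hvine : ∃ k, vi k ≠ 0 := by
    by_contra hcon
    push_neg at hcon
    exact hB.eigenvectorBasis.orthonormal.ne_zero i (by ext t; exact hcon t)
  obtain ⟨k, hk⟩ := hvine
  set u : Fin n → ℝ := fun t => vj k * vi t - vi k * vj t with hu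
  have hueig : B *ᵥ u = μ • u := by
    funext t
    have h1 : ∑ s, B t s * vi s = μ * vi t := congrFun hvi t
    have h2 : ∑ s, B t s * vj s = μ * vj t := congrFun hvj t
    show ∑ s, B t s * u s = μ * u t
    calc ∑ s, B t s * u s
        = vj k * (∑ s, B t s * vi s) - vi k * (∑ s, B t s * vj s) := by
          rw [Finset.mul_sum, Finset.mul_sum, ← Finset.sum_sub_distrib]
          exact Finset.sum_congr rfl fun s _ => by rw [hu]; ring
      _ = μ * u t := by rw [h1, h2, hu]; ring
  have huk : u k = 0 := by rw [hu]; ring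
  have hune : u ≠ 0 := by
    intro h0
    have hfun : ∀ t, vj k * vi t = vi k * vj t := by
      intro t
      have := congrFun h0 t
      rw [hu] at this
      simp at this
      linarith [this]
    by_cases hk2 : vj k = 0
    · obtain ⟨t, ht⟩ : ∃ t, vj t ≠ 0 := by
        by_contra hcon
        push_neg at hcon
        exact hB.eigenvectorBasis.orthonormal.ne_zero j (by ext t; exact hcon t)
      have := hfun t
      rw [hk2, zero_mul] at this
      exact ht ((mul_eq_zero.mp this.symm).resolve_left hk)
    · have e1 : dotProduct vi vi = 1 := by
        have := dot_eigen hB i i; rwa [if_pos rfl] at this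
      have e2 : dotProduct vi vj = 0 := by
        have := dot_eigen hB i j; rwa [if_neg hij] at this
      have e1' : ∑ t, vi t * vi t = 1 := e1
      have e2' : ∑ t, vi t * vj t = 0 := e2
      have : vj k = vi k * ∑ t, vi t * vj t := by
        calc vj k = vj k * ∑ t, vi t * vi t := by rw [e1', mul_one]
          _ = ∑ t, vi t * (vj k * vi t) := by
              rw [Finset.mul_sum]
              exact Finset.sum_congr rfl fun t _ => by ring
          _ = ∑ t, vi t * (vi k * vj t) := Finset.sum_congr rfl fun t _ => by rw [hfun t]
          _ = vi k * ∑ t, vi t * vj t := by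
              rw [Finset.mul_sum]
              exact Finset.sum_congr rfl fun t _ => by ring
      rw [e2', mul_zero] at this
      exact hk2 this
  set w : Fin n → ℝ := fun t => |u t| with hw
  have hww : dotProduct w w = dotProduct u u :=
    Finset.sum_congr rfl fun t _ => by rw [hw]; exact abs_mul_abs_self _
  have h1 : dotProduct u (B *ᵥ u) = μ * dotProduct u u := by
    rw [hueig, dotProduct_smul, smul_eq_mul]
  have hBnn : ∀ t s, t ≠ s → 0 ≤ B t s := fun t s h => hnonneg t s h
  have hle : dotProduct u (B *ᵥ u) ≤ dotProduct w (B *ᵥ w) := by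
    have expand : ∀ v : Fin n → ℝ, dotProduct v (B *ᵥ v) = ∑ t, ∑ s, v t * (B t s * v s) := by
      intro v
      refine Finset.sum_congr rfl fun t _ => ?_
      rw [show (B *ᵥ v) t = ∑ s, B t s * v s from rfl, Finset.mul_sum]
    rw [expand, expand]
    refine Finset.sum_le_sum fun t _ => Finset.sum_le_sum fun s _ => ?_
    by_cases hts : t = s
    · subst hts
      exact le_of_eq (by rw [hw]; linear_combination B t t * (abs_mul_abs_self (u t)).symm)
    · calc u t * (B t s * u s) ≤ |u t * (B t s * u s)| := le_abs_self _
        _ = |u t| * (B t s * |u s|) := by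
            rw [abs_mul, abs_mul, abs_of_nonneg (hBnn t s hts)]
        _ = w t * (B t s * w s) := by rw [hw]
  have hge : dotProduct w (B *ᵥ w) ≤ μ * dotProduct w w := rayleigh_le hB hμ w
  have hquad : dotProduct w (B *ᵥ w) = μ * dotProduct w w := by
    rw [hww] at hge ⊢
    linarith [h1, hle, hge]
  have hweig : B *ᵥ w = μ • w := rayleigh_eq hB hμ w hquad
  have hwk : w k = 0 := by rw [hw]; simp [huk]
  have hwnn : ∀ t, 0 ≤ w t := fun t => by rw [hw]; exact abs_nonneg _
  have hprop : ∀ a b, G.Adj a b → w a = 0 → w b = 0 := by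
    intro a b hab ha0
    have hsum : ∑ s, B a s * w s = μ * w a := congrFun hweig a
    rw [ha0, mul_zero] at hsum
    rw [← Finset.sum_erase_add Finset.univ _ (Finset.mem_univ a), ha0, mul_zero, add_zero] at hsum
    have hmem : b ∈ Finset.univ.erase a := Finset.mem_erase.mpr ⟨hab.ne', Finset.mem_univ b⟩
    have hz := (Finset.sum_eq_zero_iff_of_nonneg fun s hs => ?_).mp hsum b hmem
    · rcases mul_eq_zero.mp hz with h | h
      · exact absurd h (hpos a b hab).ne'
      · exact h
    · exact mul_nonneg (hBnn a s ((Finset.mem_erase.mp hs).1.symm)) (hwnn s)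
  have hall : ∀ x, w x = 0 := by
    have step : ∀ {a b : Fin n} (p : G.Walk a b), w a = 0 → w b = 0 := by
      intro a b p
      induction p with
      | nil => exact id
      | cons h q ih => exact fun h0 => ih (hprop _ _ h h0)
    intro x
    obtain ⟨p⟩ := hGc.preconnected k x
    exact step p hwk
  apply hune
  funext t
  have := hall t
  rw [hw] at this
  simpa using abs_eq_zero.mp this
open Polynomial SimpleGraph

noncomputable def wsgn {n : ℕ} (A : Matrix (Fin n) (Fin n) ℝ) {G : SimpleGraph (Fin n)}
    {u v : Fin n} (p : G.Walk u v) : ℝ :=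
  (p.darts.map (fun e => Real.sign (A e.toProd.1 e.toProd.2))).prod

lemma wsgn_cons {n : ℕ} (A : Matrix (Fin n) (Fin n) ℝ) {G : SimpleGraph (Fin n)}
    {u v w : Fin n} (h : G.Adj u v) (p : G.Walk v w) :
    wsgn A (Walk.cons h p) = Real.sign (A u v) * wsgn A p := by
  simp [wsgn]

lemma wsgn_append {n : ℕ} (A : Matrix (Fin n) (Fin n) ℝ) {G : SimpleGraph (Fin n)}
    {u v w : Fin n} (p : G.Walk u v) (q : G.Walk v w) :
    wsgn A (p.append q) = wsgn A p * wsgn A q := by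
  simp [wsgn, Walk.darts_append]

lemma wsgn_sq {n : ℕ} {A : Matrix (Fin n) (Fin n) ℝ} {G : SimpleGraph (Fin n)}
    (hpat : ∀ i j : Fin n, i ≠ j → (A i j ≠ 0 ↔ G.Adj i j))
    {u v : Fin n} (p : G.Walk u v) : wsgn A p * wsgn A p = 1 := by
  induction p with
  | nil => simp [wsgn]
  | cons h p ih =>
    rename_i a b c
    rw [wsgn_cons, mul_mul_mul_comm, ih, mul_one]
    have hne : A a b ≠ 0 := (hpat a b h.ne).mpr h
    rcases Real.sign_apply_eq_of_ne_zero _ hne with h' | h' <;> rw [h'] <;> norm_num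

lemma exists_sign_vector {n : ℕ} (hn : 2 ≤ n) (A : Matrix (Fin n) (Fin n) ℝ) (hA : A.IsSymm)
    (G : SimpleGraph (Fin n)) (hG : G.IsTree)
    (hpat : ∀ i j : Fin n, i ≠ j → (A i j ≠ 0 ↔ G.Adj i j)) :
    ∃ d : Fin n → ℝ, (∀ i, d i * d i = 1) ∧
      ∀ i j, G.Adj i j → d i * d j = Real.sign (A i j) := by
  classical
  have r : Fin n := ⟨0, by omega⟩
  choose f hf hf' using (fun v => hG.existsUnique_path r v)
  refine ⟨fun v => wsgn A (f v), fun i => wsgn_sq hpat _, fun i j h => ?_⟩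
  by_cases hj : j ∈ (f i).support
  · -- f i = f j ++ (single edge j i)
    have hd : (f i).dropUntil j hj = Walk.cons h.symm Walk.nil := by
      refine (hG.existsUnique_path j i).unique ((hf i).dropUntil hj) ?_
      rw [Walk.cons_isPath_iff]
      exact ⟨Walk.IsPath.nil, by simp; exact h.ne'⟩
    have ht : (f i).takeUntil j hj = f j := hf' j _ ((hf i).takeUntil hj)
    have hsplit : f i = (f j).append (Walk.cons h.symm Walk.nil) := by
      rw [← ht, ← hd, Walk.take_spec]
    have hAji : A j i = A i j := by
      have := hA; rw [Matrix.IsSymm] at this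
      conv_lhs => rw [← this]
      rfl
    show wsgn A (f i) * wsgn A (f j) = _
    rw [hsplit, wsgn_append, wsgn_cons]
    have h2 := wsgn_sq hpat (f j)
    have hnil : wsgn A (Walk.nil : G.Walk i i) = 1 := by simp [wsgn]
    rw [hnil, mul_one, hAji, mul_right_comm, h2, one_mul]
  · -- f j = (f i).concat h
    have hp : ((f i).concat h).IsPath := by
      have : (f i).concat h = (Walk.cons h.symm (f i).reverse).reverse := by
        rw [Walk.reverse_cons, Walk.reverse_reverse, Walk.concat_eq_append]
      rw [this, Walk.isPath_reverse_iff, Walk.cons_isPath_iff]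
      refine ⟨(hf i).reverse, ?_⟩
      rw [Walk.support_reverse, List.mem_reverse]
      exact hj
    have hfj : f j = (f i).concat h := (hf' j _ hp).symm
    show wsgn A (f i) * wsgn A (f j) = _
    rw [hfj]
    have : wsgn A ((f i).concat h) = wsgn A (f i) * Real.sign (A i j) := by
      simp [wsgn, Walk.darts_concat]
    rw [this, ← mul_assoc, wsgn_sq hpat (f i), one_mul]
open Polynomial Matrix

theorem stmt_3 (n : ℕ) (hn : 2 ≤ n) (A : Matrix (Fin n) (Fin n) ℝ) (hA : A.IsSymm)
    (G : SimpleGraph (Fin n)) (hG : G.IsTree)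
    (hpat : ∀ i j : Fin n, i ≠ j → (A i j ≠ 0 ↔ G.Adj i j)) :
    (∃ μ : ℝ, A.charpoly.IsRoot μ ∧ (∀ x : ℝ, A.charpoly.IsRoot x → x ≤ μ) ∧
      A.charpoly.rootMultiplicity μ = 1) ∧
    ¬ ∃ g : Polynomial ℝ, A.charpoly = g ^ 2 := by
  classical
  have hAsym : ∀ i j, A j i = A i j := by
    intro i j
    conv_lhs => rw [← hA]
    rfl
  obtain ⟨d, hd1, hd2⟩ := exists_sign_vector hn A hA G hG hpat
  set B : Matrix (Fin n) (Fin n) ℝ := Matrix.of (fun i j => d i * A i j * d j) with hBdef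
  have hBapp : ∀ i j, B i j = d i * A i j * d j := fun i j => rfl
  have hDD : Matrix.diagonal d * Matrix.diagonal d = 1 := by
    rw [Matrix.diagonal_mul_diagonal]
    have : (fun i => d i * d i) = fun _ => (1 : ℝ) := funext hd1
    rw [this, Matrix.diagonal_one]
  have hBA : B = Matrix.diagonal d * A * Matrix.diagonal d := by
    ext i j
    rw [hBapp, Matrix.mul_diagonal, Matrix.diagonal_mul]
  have hcp : A.charpoly = B.charpoly := by
    rw [hBA, charpoly_conj_aux _ _ _ hDD]
  have hBherm : B.IsHermitian := by
    rw [Matrix.IsHermitian, Matrix.conjTranspose_eq_transpose_of_trivial]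
    ext i j
    rw [Matrix.transpose_apply, hBapp, hBapp, hAsym]
    ring
  set ev := hBherm.eigenvalues with hev
  have hcharB : A.charpoly = ∏ i, (X - C (ev i)) := by
    rw [hcp, herm_charpoly hBherm]
  have hroots : A.charpoly.roots = Finset.univ.val.map ev := by
    rw [hcharB]
    have : ∏ i, (X - C (ev i)) = (Multiset.map (fun a => X - C a) (Finset.univ.val.map ev)).prod := by
      rw [Multiset.map_map]
      rfl
    rw [this, roots_multiset_prod_X_sub_C]
  have hne0 : A.charpoly ≠ 0 := (A.charpoly_monic).ne_zero
  have hisroot : ∀ x : ℝ, A.charpoly.IsRoot x ↔ ∃ i, ev i = x := by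
    intro x
    constructor
    · intro hx
      have : x ∈ A.charpoly.roots := (Polynomial.mem_roots hne0).mpr hx
      rw [hroots, Multiset.mem_map] at this
      obtain ⟨i, -, hi⟩ := this
      exact ⟨i, hi⟩
    · rintro ⟨i, rfl⟩
      have : ev i ∈ A.charpoly.roots := by
        rw [hroots, Multiset.mem_map]
        exact ⟨i, Finset.mem_val.mpr (Finset.mem_univ i), rfl⟩
      exact ((Polynomial.mem_roots hne0).mp this)
  obtain ⟨i0, -, hi0⟩ := Finset.exists_max_image (Finset.univ : Finset (Fin n)) ev
    ⟨⟨0, by omega⟩, Finset.mem_univ _⟩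
  set μ := ev i0 with hμdef
  have hμle : ∀ i, ev i ≤ μ := fun i => hi0 i (Finset.mem_univ i)
  -- apply key_simple
  have hpos : ∀ i j, G.Adj i j → 0 < B i j := by
    intro i j hadj
    have hne : A i j ≠ 0 := (hpat i j hadj.ne).mpr hadj
    have : B i j = Real.sign (A i j) * A i j := by
      rw [hBapp, ← hd2 i j hadj]
      ring
    rw [this]
    exact Real.sign_mul_pos_of_ne_zero _ hne
  have hnonneg : ∀ i j, i ≠ j → 0 ≤ B i j := by
    intro i j hij
    by_cases hadj : G.Adj i j
    · exact (hpos i j hadj).le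
    · have : A i j = 0 := by
        by_contra hcon
        exact hadj ((hpat i j hij).mp hcon)
      rw [hBapp, this]
      simp
  have huniq : ∀ i, ev i = μ → i = i0 := fun i hi =>
    key_simple hBherm G hG.isConnected hpos hnonneg hμle hi rfl
  have hmult : A.charpoly.rootMultiplicity μ = 1 := by
    rw [← Polynomial.count_roots, hroots, Multiset.count_map]
    have hfe : Finset.filter (fun a => μ = ev a) Finset.univ = {i0} := by
      apply Finset.eq_singleton_iff_unique_mem.mpr
      constructor
      · exact Finset.mem_filter.mpr ⟨Finset.mem_univ i0, rfl⟩
      · intro x hx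
        exact huniq x ((Finset.mem_filter.mp hx).2).symm
    calc Multiset.card (Multiset.filter (fun a => μ = ev a) Finset.univ.val)
        = (Finset.filter (fun a => μ = ev a) Finset.univ).card := rfl
      _ = 1 := by rw [hfe]; rfl
  refine ⟨⟨μ, ?_, ?_, hmult⟩, ?_⟩
  · exact (hisroot μ).mpr ⟨i0, rfl⟩
  · intro x hx
    obtain ⟨i, hi⟩ := (hisroot x).mp hx
    rw [← hi]
    exact hμle i
  · rintro ⟨g, hg⟩
    have hgne : g ≠ 0 := by
      intro h
      rw [h] at hg
      simp at hg
      exact hne0 hg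
    have hsq : A.charpoly = g * g := by rw [hg]; ring
    have : A.charpoly.rootMultiplicity μ =
        g.rootMultiplicity μ + g.rootMultiplicity μ := by
      rw [hsq] at hmult ⊢
      rw [Polynomial.rootMultiplicity_mul (mul_ne_zero hgne hgne)]
    omega
end

section
/- For every n ≥ 2, the cycle graph C_{2n} on 2n vertices allows the characteristic polynomial a square: there exists a real symmetric 2n×2n matrix M whose off-diagonal nonzero pattern is exactly the edge set of the cycle C_{2n} and whose characteristic polynomial is the square of a real polynomial. -/
open Polynomial Matrix

section general

variable {m : Type*} [DecidableEq m] [Fintype m] {R : Type*} [CommRing R]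

lemma my_det_skew_blocks (e : R) (he : e * e = -1) (P Q : Matrix m m R) :
    (fromBlocks P Q (-Q) P).det = (P + e • Q).det * (P - e • Q).det := by
  have he' : e ^ 2 = -1 := by rw [pow_two, he]
  have key : fromBlocks 1 0 (e • 1) 1 * fromBlocks P Q (-Q) P *
        fromBlocks 1 0 (-(e • (1 : Matrix m m R))) 1
      = fromBlocks (P - e • Q) Q 0 (P + e • Q) := by
    rw [fromBlocks_multiply, fromBlocks_multiply]
    ext i j
    rcases i with k | k <;> rcases j with l | l <;>
      simp [fromBlocks, Matrix.smul_mul, Matrix.mul_smul, smul_eq_mul, sub_eq_add_neg] <;>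
      ring_nf <;> simp [he']
  have hdet : (fromBlocks P Q (-Q) P).det = (fromBlocks (P - e • Q) Q 0 (P + e • Q)).det := by
    rw [← key, det_mul, det_mul, det_fromBlocks_zero₁₂, det_fromBlocks_zero₁₂]
    simp
  rw [hdet, det_fromBlocks_zero₂₁]
  ring

lemma my_charmatrix_transpose (M : Matrix m m R) : charmatrix Mᵀ = (charmatrix M)ᵀ := by
  ext i j
  by_cases h : i = j
  · subst h; simp
  · simp [charmatrix_apply_ne _ _ _ h, charmatrix_apply_ne _ _ _ (Ne.symm h)]

lemma my_charpoly_transpose (M : Matrix m m R) : Mᵀ.charpoly = M.charpoly := by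
  rw [Matrix.charpoly, my_charmatrix_transpose, det_transpose, Matrix.charpoly]

/-- charmatrix of a sum shift. -/
lemma my_charmatrix_add_smul (A S : Matrix m m R) (z : R) :
    charmatrix (A + z • S) = charmatrix A - (C z) • S.map C := by
  ext i j
  by_cases h : i = j
  · subst h; simp [charmatrix_apply_eq, smul_eq_mul]; ring
  · simp [charmatrix_apply_ne _ _ _ h, smul_eq_mul]; ring

end general

section defs

variable (R : Type*) [CommRing R] (n : ℕ)

/-- path adjacency matrix -/
def pA : Matrix (Fin n) (Fin n) R :=
  Matrix.of fun i j => if (i : ℕ) + 1 = j ∨ (j : ℕ) + 1 = i then 1 else 0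

/-- the skew corner matrix -/
def sS : Matrix (Fin n) (Fin n) R :=
  Matrix.of fun i j =>
    if (i : ℕ) = n - 1 ∧ (j : ℕ) = 0 then 1
    else if (i : ℕ) = 0 ∧ (j : ℕ) = n - 1 then -1 else 0

variable {n}

lemma pA_transpose : (pA R n)ᵀ = pA R n := by
  ext i j; simp [pA, transpose_apply, or_comm]

lemma sS_transpose (hn : 2 ≤ n) : (sS R n)ᵀ = -(sS R n) := by
  ext i j
  have hi := i.2
  have hj := j.2
  simp only [sS, transpose_apply, Matrix.of_apply, Matrix.neg_apply]
  split_ifs <;> first | ring1 | (exfalso; omega)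

end defs

section cx

open Complex

variable {n : ℕ}

lemma pA_map : (pA ℝ n).map (algebraMap ℝ ℂ) = pA ℂ n := by
  ext i j
  simp only [pA, Matrix.map_apply, Matrix.of_apply]
  split_ifs <;> simp

lemma sS_map : (sS ℝ n).map (algebraMap ℝ ℂ) = sS ℂ n := by
  ext i j
  simp only [sS, Matrix.map_apply, Matrix.of_apply]
  split_ifs <;> simp

/-- The complex Hermitian matrix whose charpoly is the square root. -/
noncomputable def Ncx (n : ℕ) : Matrix (Fin n) (Fin n) ℂ := pA ℂ n + Complex.I • sS ℂ n

lemma Ncx_transpose (hn : 2 ≤ n) : (Ncx n)ᵀ = pA ℂ n + (-Complex.I) • sS ℂ n := by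
  rw [Ncx, transpose_add, transpose_smul, pA_transpose, sS_transpose _ hn]
  rw [smul_neg, neg_smul]

lemma blocks_charpoly (hn : 2 ≤ n) :
    (fromBlocks (pA ℂ n) (sS ℂ n) (-(sS ℂ n)) (pA ℂ n)).charpoly = (Ncx n).charpoly ^ 2 := by
  have hCI : (C Complex.I : ℂ[X]) * C Complex.I = -1 := by
    rw [← C_mul, Complex.I_mul_I, _root_.map_neg, _root_.map_one]
  rw [Matrix.charpoly, charmatrix_fromBlocks]
  have hneg : ((-(sS ℂ n)).map C) = -((sS ℂ n).map C) := by
    ext i j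
    simp [Matrix.map_apply, Matrix.neg_apply]
  rw [hneg]
  rw [my_det_skew_blocks (C Complex.I) hCI (charmatrix (pA ℂ n)) (-((sS ℂ n).map C))]
  have h1 : charmatrix (pA ℂ n) + C Complex.I • -((sS ℂ n).map C)
      = charmatrix (Ncx n) := by
    rw [Ncx, my_charmatrix_add_smul, smul_neg, ← sub_eq_add_neg]
  have h2 : charmatrix (pA ℂ n) - C Complex.I • -((sS ℂ n).map C)
      = charmatrix ((Ncx n)ᵀ) := by
    rw [Ncx_transpose hn, my_charmatrix_add_smul, smul_neg, sub_neg_eq_add, _root_.map_neg,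
      neg_smul, sub_neg_eq_add]
  rw [h1, h2, ← Matrix.charpoly, ← Matrix.charpoly, my_charpoly_transpose, pow_two]

lemma Ncx_conj (hn : 2 ≤ n) :
    (Ncx n).map (starRingEnd ℂ) = (Ncx n)ᵀ := by
  rw [Ncx_transpose hn]
  ext i j
  simp only [Ncx, Matrix.map_apply, Matrix.add_apply, Matrix.smul_apply, smul_eq_mul,
    _root_.map_add, _root_.map_mul, Complex.conj_I, pA, sS, Matrix.of_apply, neg_mul]
  split_ifs <;> simp

lemma charpoly_conj_fixed (hn : 2 ≤ n) :
    (Ncx n).charpoly.map (starRingEnd ℂ) = (Ncx n).charpoly := by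
  rw [← Matrix.charpoly_map, Ncx_conj hn, my_charpoly_transpose]

lemma exists_real_sqrt (hn : 2 ≤ n) :
    ∃ g : ℝ[X], g.map (algebraMap ℝ ℂ) = (Ncx n).charpoly := by
  rw [← Polynomial.mem_lifts, Polynomial.lifts_iff_coeff_lifts]
  intro k
  have h := charpoly_conj_fixed hn
  have hk : (starRingEnd ℂ) ((Ncx n).charpoly.coeff k) = (Ncx n).charpoly.coeff k := by
    conv_rhs => rw [← h]
    rw [Polynomial.coeff_map]
  obtain ⟨r, hr⟩ := Complex.conj_eq_iff_real.mp hk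
  exact ⟨r, by simp [hr]⟩

end cx

theorem stmt_8 (n : ℕ) (hn : 2 ≤ n) :
    ∃ M : Matrix (Fin (2 * n)) (Fin (2 * n)) ℝ, M.IsSymm ∧
      (∀ i j : Fin (2 * n), i ≠ j → (M i j ≠ 0 ↔ (SimpleGraph.cycleGraph (2 * n)).Adj i j)) ∧
      ∃ g : Polynomial ℝ, M.charpoly = g ^ 2 := by
  classical
  set e : Fin n ⊕ Fin n ≃ Fin (2 * n) := finSumFinEquiv.trans (finCongr (two_mul n).symm) with he
  set B : Matrix (Fin n ⊕ Fin n) (Fin n ⊕ Fin n) ℝ :=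
    fromBlocks (pA ℝ n) (sS ℝ n) (-(sS ℝ n)) (pA ℝ n) with hB
  refine ⟨Matrix.reindex e e B, ?_, ?_, ?_⟩
  · -- symmetry
    rw [Matrix.IsSymm, Matrix.transpose_reindex]
    congr 1
    rw [hB, fromBlocks_transpose, transpose_neg, pA_transpose, sS_transpose _ hn]
    simp
  · -- pattern
    have hval : ∀ x y : Fin n ⊕ Fin n, B x y =
        (if ((e x : ℕ)) + 1 = (e y : ℕ) ∨ ((e y : ℕ)) + 1 = (e x : ℕ) then 1
         else if ((e x : ℕ) = 0 ∧ (e y : ℕ) = 2 * n - 1) ∨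
             ((e y : ℕ) = 0 ∧ (e x : ℕ) = 2 * n - 1) then -1 else (0 : ℝ)) := by
      rintro (a | a) (b | b) <;>
        · have ha := a.2
          have hb := b.2
          simp only [hB, he, fromBlocks, Matrix.of_apply, Sum.elim_inl, Sum.elim_inr,
            Equiv.trans_apply, finSumFinEquiv_apply_left, finSumFinEquiv_apply_right,
            finCongr_apply_coe, Fin.coe_castAdd, Fin.coe_natAdd, pA, sS, Matrix.neg_apply]
          split_ifs <;> first | ring1 | (exfalso; omega)
    intro i j hij
    have hiv : (Matrix.reindex e e B) i j = B (e.symm i) (e.symm j) := rfl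
    rw [hiv, hval (e.symm i) (e.symm j), Equiv.apply_symm_apply, Equiv.apply_symm_apply]
    have hi := i.2
    have hj := j.2
    have hij' : (i : ℕ) ≠ (j : ℕ) := fun h => hij (Fin.ext h)
    have hN : 2 ≤ 2 * n := by omega
    -- adjacency in the cycle graph
    have hadj : (SimpleGraph.cycleGraph (2 * n)).Adj i j ↔
        ((i : ℕ) + 1 = (j : ℕ) ∨ ((j : ℕ)) + 1 = (i : ℕ) ∨
          ((i : ℕ) = 0 ∧ (j : ℕ) = 2 * n - 1) ∨ ((j : ℕ) = 0 ∧ (i : ℕ) = 2 * n - 1)) := by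
      rw [SimpleGraph.cycleGraph_adj']
      have hs1 : ((i - j : Fin (2 * n)) : ℕ) = (2 * n - (j : ℕ) + (i : ℕ)) % (2 * n) := by
        rw [Fin.sub_def]
      have hs2 : ((j - i : Fin (2 * n)) : ℕ) = (2 * n - (i : ℕ) + (j : ℕ)) % (2 * n) := by
        rw [Fin.sub_def]
      rw [hs1, hs2]
      have key : ∀ x : ℕ, x < 2 * (2 * n) → (x % (2 * n) = 1 ↔ (x = 1 ∨ x = 2 * n + 1)) := by
        intro x hx
        rcases lt_or_ge x (2 * n) with h | h
        · rw [Nat.mod_eq_of_lt h]; omega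
        · rw [Nat.mod_eq_sub_mod h, Nat.mod_eq_of_lt (by omega)]; omega
      rw [key _ (by omega), key _ (by omega)]
      omega
    rw [hadj]
    by_cases h1 : (i : ℕ) + 1 = (j : ℕ) ∨ ((j : ℕ)) + 1 = (i : ℕ)
    · rw [if_pos h1]
      simp only [ne_eq, one_ne_zero, not_false_eq_true, true_iff]
      omega
    · by_cases h2 : ((i : ℕ) = 0 ∧ (j : ℕ) = 2 * n - 1) ∨ ((j : ℕ) = 0 ∧ (i : ℕ) = 2 * n - 1)
      · rw [if_neg h1, if_pos h2]
        simp only [ne_eq, neg_eq_zero, one_ne_zero, not_false_eq_true, true_iff]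
        omega
      · rw [if_neg h1, if_neg h2]
        simp only [ne_eq, eq_self_iff_true, not_true, false_iff]
        omega
  · -- charpoly is a square
    obtain ⟨g, hg⟩ := exists_real_sqrt (n := n) hn
    refine ⟨g, ?_⟩
    have h1 : (Matrix.reindex e e B).charpoly = B.charpoly := Matrix.charpoly_reindex e B
    have h2 : (B.map (algebraMap ℝ ℂ)).charpoly = B.charpoly.map (algebraMap ℝ ℂ) :=
      Matrix.charpoly_map B (algebraMap ℝ ℂ)
    have h3 : B.map (algebraMap ℝ ℂ) =
        fromBlocks (pA ℂ n) (sS ℂ n) (-(sS ℂ n)) (pA ℂ n) := by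
      have hneg : ((-(sS ℝ n)).map (algebraMap ℝ ℂ)) = -((sS ℝ n).map (algebraMap ℝ ℂ)) := by
        ext i j
        simp [Matrix.map_apply, Matrix.neg_apply]
      rw [hB, fromBlocks_map, pA_map, sS_map, hneg, sS_map]
    have h4 := blocks_charpoly (n := n) hn
    have hmap : B.charpoly.map (algebraMap ℝ ℂ) = (g ^ 2).map (algebraMap ℝ ℂ) := by
      rw [← h2, h3, h4, Polynomial.map_pow, hg]
    have hinj : Function.Injective (algebraMap ℝ ℂ) := fun a b h => by
      simpa using congrArg Complex.re h
    rw [h1, Polynomial.map_injective _ hinj hmap]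
end

section
/- If A and B are real symmetric matrices and the characteristic polynomial of A is the square of a real polynomial, then the characteristic polynomial of the Kronecker (tensor) product A ⊗ B is also the square of a real polynomial. -/
open Polynomial Matrix

private lemma charpoly_diagonal' {k : Type*} [DecidableEq k] [Fintype k] {R : Type*}
    [CommRing R] (d : k → R) :
    (Matrix.diagonal d).charpoly = ∏ i, (X - C (d i)) := by
  have hc : charmatrix (Matrix.diagonal d) = Matrix.diagonal fun i => X - C (d i) := by
    ext i j
    by_cases hij : i = j
    · subst hij; simp [charmatrix_apply_eq]
    · simp [charmatrix_apply_ne _ _ _ hij, Matrix.diagonal_apply_ne _ hij]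
  rw [Matrix.charpoly, hc, Matrix.det_diagonal]

private lemma charpoly_conj' {k : Type*} [DecidableEq k] [Fintype k] {R : Type*}
    [CommRing R] (P M Q : Matrix k k R) (hPQ : P * Q = 1) (hQP : Q * P = 1) :
    (P * M * Q).charpoly = M.charpoly := by
  set f : Matrix k k R →+* Matrix k k R[X] := (C : R →+* R[X]).mapMatrix with hf
  have hcomm : Commute (Matrix.scalar k (X : R[X])) (f P) :=
    Matrix.scalar_commute _ (fun r' => Commute.all _ _) _
  have hc : charmatrix (P * M * Q) = f P * charmatrix M * f Q := by
    have hsc : f P * (Matrix.scalar k (X : R[X])) * f Q = Matrix.scalar k (X : R[X]) := by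
      rw [← hcomm.eq, mul_assoc, ← _root_.map_mul f, hPQ, _root_.map_one, mul_one]
    calc charmatrix (P * M * Q)
        = (Matrix.scalar k (X : R[X])) - f (P * M * Q) := rfl
      _ = f P * (Matrix.scalar k (X : R[X])) * f Q - f P * f M * f Q := by
          rw [hsc, _root_.map_mul f, _root_.map_mul f]
      _ = f P * ((Matrix.scalar k (X : R[X])) - f M) * f Q := by
          rw [mul_sub, sub_mul]
      _ = f P * charmatrix M * f Q := rfl
  rw [Matrix.charpoly, Matrix.charpoly, hc, Matrix.det_mul, Matrix.det_mul]
  have hdet : (f P).det * (f Q).det = 1 := by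
    rw [← Matrix.det_mul, ← _root_.map_mul f, hPQ, _root_.map_one, Matrix.det_one]
  calc (f P).det * (charmatrix M).det * (f Q).det
      = (charmatrix M).det * ((f P).det * (f Q).det) := by ring
    _ = (charmatrix M).det := by rw [hdet, mul_one]

theorem stmt_9 (n m : ℕ) (A : Matrix (Fin n) (Fin n) ℝ) (B : Matrix (Fin m) (Fin m) ℝ)
    (hA : A.IsSymm) (hB : B.IsSymm) (h : ∃ g : Polynomial ℝ, A.charpoly = g ^ 2) :
    ∃ h : Polynomial ℝ, (Matrix.kroneckerMap (· * ·) A B).charpoly = h ^ 2 := by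
  obtain ⟨g, hg⟩ := h
  have hA' : A.IsHermitian := by
    rwa [Matrix.IsHermitian, Matrix.conjTranspose_eq_transpose_of_trivial]
  have hB' : B.IsHermitian := by
    rwa [Matrix.IsHermitian, Matrix.conjTranspose_eq_transpose_of_trivial]
  set U : Matrix (Fin n) (Fin n) ℝ := (Matrix.IsHermitian.eigenvectorUnitary hA' : Matrix (Fin n) (Fin n) ℝ)
  set V : Matrix (Fin m) (Fin m) ℝ := (Matrix.IsHermitian.eigenvectorUnitary hB' : Matrix (Fin m) (Fin m) ℝ)
  set dA : Fin n → ℝ := RCLike.ofReal ∘ hA'.eigenvalues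
  set dB : Fin m → ℝ := RCLike.ofReal ∘ hB'.eigenvalues
  have hAeq : A = U * Matrix.diagonal dA * star U := hA'.spectral_theorem
  have hBeq : B = V * Matrix.diagonal dB * star V := hB'.spectral_theorem
  have hUU : U * star U = 1 := (Matrix.mem_unitaryGroup_iff).mp (Matrix.IsHermitian.eigenvectorUnitary hA').2
  have hUU' : star U * U = 1 := (Matrix.mem_unitaryGroup_iff').mp (Matrix.IsHermitian.eigenvectorUnitary hA').2
  have hVV : V * star V = 1 := (Matrix.mem_unitaryGroup_iff).mp (Matrix.IsHermitian.eigenvectorUnitary hB').2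
  have hVV' : star V * V = 1 := (Matrix.mem_unitaryGroup_iff').mp (Matrix.IsHermitian.eigenvectorUnitary hB').2
  -- charpoly of A in terms of dA
  have hchA : A.charpoly = ∏ i, (X - C (dA i)) := by
    rw [hAeq, charpoly_conj' U _ (star U) hUU hUU', charpoly_diagonal']
  -- Kronecker product
  have hkron : Matrix.kroneckerMap (· * ·) A B =
      (Matrix.kroneckerMap (· * ·) U V) *
        (Matrix.diagonal fun p : Fin n × Fin m => dA p.1 * dB p.2) *
        (Matrix.kroneckerMap (· * ·) (star U) (star V)) := by
    rw [hAeq, hBeq, Matrix.mul_kronecker_mul, Matrix.mul_kronecker_mul,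
      Matrix.kroneckerMap_diagonal_diagonal _ (fun _ => zero_mul _) (fun _ => mul_zero _)]
  have hkronUV : (Matrix.kroneckerMap (· * ·) U V) * (Matrix.kroneckerMap (· * ·) (star U) (star V)) = 1 := by
    rw [← Matrix.mul_kronecker_mul, hUU, hVV, Matrix.one_kronecker_one]
  have hkronUV' : (Matrix.kroneckerMap (· * ·) (star U) (star V)) * (Matrix.kroneckerMap (· * ·) U V) = 1 := by
    rw [← Matrix.mul_kronecker_mul, hUU', hVV', Matrix.one_kronecker_one]
  have hchAB : (Matrix.kroneckerMap (· * ·) A B).charpoly =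
      ∏ p : Fin n × Fin m, (X - C (dA p.1 * dB p.2)) := by
    rw [hkron, charpoly_conj' _ _ _ hkronUV hkronUV', charpoly_diagonal']
  -- multiset of eigenvalues of A
  set M : Multiset ℝ := Finset.univ.val.map dA with hM
  have hMprod : (M.map fun r => X - C r).prod = g ^ 2 := by
    rw [← hg, hchA, hM, Multiset.map_map]
    rfl
  -- g splits, M = g.roots + g.roots
  have hsplit2 : Splits (g ^ 2) := by
    rw [← hg, hchA]
    exact Splits.prod fun i _ => Splits.X_sub_C _
  have hgne : g ≠ 0 := by
    intro h0
    have := A.charpoly_monic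
    rw [hg, h0] at this
    simp [Polynomial.Monic] at this
  have hgsplit : Splits g :=
    hsplit2.of_dvd (pow_ne_zero 2 hgne) (dvd_pow_self g two_ne_zero)
  have hMroots : M = g.roots + g.roots := by
    have h1 : (M.map fun r => X - C r).prod.roots = M := roots_multiset_prod_X_sub_C M
    rw [hMprod, roots_pow] at h1
    rw [← h1, two_smul]
  -- for each j, the inner product is a square
  have key : ∀ c : ℝ, (∏ i, (X - C (dA i * c))) =
      ((g.roots.map fun r => X - C (r * c)).prod) ^ 2 := by
    intro c
    have : (∏ i, (X - C (dA i * c))) = (M.map fun r => X - C (r * c)).prod := by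
      rw [hM, Multiset.map_map]; rfl
    rw [this, hMroots, Multiset.map_add, Multiset.prod_add, sq]
  refine ⟨∏ j, (g.roots.map fun r => X - C (r * dB j)).prod, ?_⟩
  rw [hchAB, ← Finset.prod_pow]
  rw [Fintype.prod_prod_type_right]
  exact Finset.prod_congr rfl fun j _ => key (dB j)
end

section
/- Let B be a symmetric m×m real matrix with eigenvalues μ_1,...,μ_m and let u be a unit eigenvector of B for μ_1. Let A = [[A_1, b],[b^T, μ_1]] be an n×n real symmetric matrix (with (n,n) entry equal to μ_1) with eigenvalues λ_1,...,λ_n. Then the (n-1+m)×(n-1+m) matrix C = [[A_1, b u^T],[u b^T, B]] has eigenvalues λ_1,...,λ_n, μ_2,...,μ_m. -/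
open Polynomial Matrix

set_option maxHeartbeats 1000000 in
set_option synthInstance.maxHeartbeats 400000 in
lemma aux_charmatrix_map {n R S : Type*} [CommRing R] [CommRing S] [Fintype n] [DecidableEq n]
    (M : Matrix n n R) (F : R[X] →+* S) :
    (charmatrix M).map F = Matrix.scalar n (F X) - M.map (F.comp Polynomial.C) := by
  ext i j
  by_cases h : i = j <;>
    simp [charmatrix_apply, h, Matrix.scalar_apply, Matrix.diagonal_apply, Matrix.sub_apply]

lemma aux_map_neg {p q : Type*} {R S : Type*} [CommRing R] [CommRing S]
    (M : Matrix p q R) (f : R →+* S) : (-M).map f = -(M.map f) := by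
  ext i j; simp

lemma aux_sandwich {k m K : Type*} [Fintype k] [Fintype m] [CommRing K]
    (a c : k → K) (u : m → K) (M : Matrix m m K) :
    vecMulVec a u * M * vecMulVec u c = (u ⬝ᵥ (M *ᵥ u)) • vecMulVec a c := by
  ext i j
  simp only [Matrix.mul_apply, vecMulVec_apply, Matrix.smul_apply, dotProduct, mulVec,
    Finset.sum_mul, Finset.mul_sum, smul_eq_mul]
  rw [Finset.sum_comm]
  refine Finset.sum_congr rfl fun p _ => Finset.sum_congr rfl fun q _ => by ring

lemma aux_key {m K : Type*} [Fintype m] [DecidableEq m] [Field K]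
    (D : Matrix m m K) [Invertible D] (v : m → K) (c : K) (hc : c ≠ 0)
    (hv : v ⬝ᵥ v = 1) (hD : D *ᵥ v = c • v) :
    v ⬝ᵥ (⅟D *ᵥ v) = c⁻¹ := by
  have h1 : ⅟D *ᵥ (D *ᵥ v) = v := by
    rw [mulVec_mulVec, invOf_mul_self, one_mulVec]
  rw [hD, mulVec_smul] at h1
  have h2 : ⅟D *ᵥ v = c⁻¹ • v := by
    rw [eq_inv_smul_iff₀ hc]; exact h1
  rw [h2, dotProduct_smul, hv, smul_eq_mul, mul_one]

set_option maxHeartbeats 2000000 in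
set_option synthInstance.maxHeartbeats 1000000 in
theorem stmt_10 (k m : ℕ) (A₁ : Matrix (Fin k) (Fin k) ℝ) (hA₁ : A₁.IsSymm)
    (b : Fin k → ℝ) (μ₁ : ℝ) (B : Matrix (Fin m) (Fin m) ℝ) (hB : B.IsSymm)
    (u : Fin m → ℝ) (hu : u ⬝ᵥ u = 1) (hBu : B *ᵥ u = μ₁ • u)
    (A : Matrix (Fin k ⊕ Fin 1) (Fin k ⊕ Fin 1) ℝ)
    (hA : A = Matrix.fromBlocks A₁ (Matrix.of fun i (_ : Fin 1) => b i)
        (Matrix.of fun (_ : Fin 1) j => b j) (Matrix.of fun _ _ => μ₁))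
    (C : Matrix (Fin k ⊕ Fin m) (Fin k ⊕ Fin m) ℝ)
    (hC : C = Matrix.fromBlocks A₁ (Matrix.of fun i j => b i * u j)
        (Matrix.of fun i j => u i * b j) B) :
    C.charpoly * (X - Polynomial.C μ₁) = A.charpoly * B.charpoly := by
  classical
  subst hA hC
  set F : ℝ[X] →+* RatFunc ℝ := algebraMap ℝ[X] (RatFunc ℝ) with hF
  have hFinj : Function.Injective F := RatFunc.algebraMap_injective ℝ
  apply hFinj
  set g : ℝ →+* RatFunc ℝ := F.comp Polynomial.C with hg
  set x : RatFunc ℝ := F X with hx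
  set bK : Fin k → RatFunc ℝ := fun i => g (b i) with hbK
  set uK : Fin m → RatFunc ℝ := fun i => g (u i) with huK
  have hxsub : x - g μ₁ = F (X - Polynomial.C μ₁) := by
    rw [map_sub]; rfl
  have hxne : x - g μ₁ ≠ 0 := by
    rw [hxsub, map_ne_zero_iff F hFinj]
    exact X_sub_C_ne_zero μ₁
  set DK : Matrix (Fin m) (Fin m) (RatFunc ℝ) := Matrix.scalar (Fin m) x - B.map g with hDK
  set DA : Matrix (Fin 1) (Fin 1) (RatFunc ℝ) :=
    Matrix.scalar (Fin 1) x - (Matrix.of fun _ _ => μ₁ : Matrix (Fin 1) (Fin 1) ℝ).map g with hDA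
  set AK : Matrix (Fin k) (Fin k) (RatFunc ℝ) := Matrix.scalar (Fin k) x - A₁.map g with hAK
  have hFB : F B.charpoly = DK.det := by
    rw [Matrix.charpoly, RingHom.map_det, RingHom.mapMatrix_apply, aux_charmatrix_map]
  have hBne : F B.charpoly ≠ 0 := by
    rw [map_ne_zero_iff F hFinj]; exact B.charpoly_monic.ne_zero
  have hDKdet : DK.det ≠ 0 := hFB ▸ hBne
  haveI iDK : Invertible DK := DK.invertibleOfIsUnitDet (isUnit_iff_ne_zero.2 hDKdet)
  have hDAdet : DA.det = x - g μ₁ := by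
    rw [Matrix.det_fin_one]
    simp [hDA, Matrix.scalar_apply]
  haveI iDA : Invertible DA := DA.invertibleOfIsUnitDet (isUnit_iff_ne_zero.2 (hDAdet ▸ hxne))
  -- eigen computation for DK
  have huK1 : uK ⬝ᵥ uK = 1 := by
    have h := (RingHom.map_dotProduct g u u).symm
    simpa [huK, hu, Function.comp_def] using h
  have hDKu : DK *ᵥ uK = (x - g μ₁) • uK := by
    funext i
    have h2 : ((B.map g) *ᵥ uK) i = g ((B *ᵥ u) i) := (RingHom.map_mulVec g B u i).symm
    simp only [hDK, Matrix.sub_mulVec, Pi.sub_apply, Pi.smul_apply, smul_eq_mul,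
      Matrix.scalar_apply, Matrix.mulVec_diagonal, h2, hBu]
    rw [g.map_mul μ₁ (u i)]
    ring
  have hkeyK : uK ⬝ᵥ (⅟DK *ᵥ uK) = (x - g μ₁)⁻¹ := aux_key DK uK _ hxne huK1 hDKu
  -- eigen computation for DA
  set vK : Fin 1 → RatFunc ℝ := fun _ => 1 with hvK
  have hvK1 : vK ⬝ᵥ vK = 1 := by simp [hvK, dotProduct]
  have hDAv : DA *ᵥ vK = (x - g μ₁) • vK := by
    funext i
    have hi : i = 0 := Subsingleton.elim _ _
    subst hi
    simp [hDA, hvK, Matrix.sub_mulVec, Matrix.scalar_apply, Matrix.mulVec_diagonal,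
      Matrix.mulVec, dotProduct, Fin.sum_univ_one]
  have hkeyA : vK ⬝ᵥ (⅟DA *ᵥ vK) = (x - g μ₁)⁻¹ := aux_key DA vK _ hxne hvK1 hDAv
  -- block maps
  have hblkC12 : ((Matrix.of fun i j => b i * u j : Matrix (Fin k) (Fin m) ℝ).map
      Polynomial.C).map F = vecMulVec bK uK := by
    ext i j; simp [vecMulVec_apply, hbK, huK, hg]
  have hblkC21 : ((Matrix.of fun i j => u i * b j : Matrix (Fin m) (Fin k) ℝ).map
      Polynomial.C).map F = vecMulVec uK bK := by
    ext i j; simp [vecMulVec_apply, hbK, huK, hg, mul_comm]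
  have hblkA12 : ((Matrix.of fun i (_ : Fin 1) => b i : Matrix (Fin k) (Fin 1) ℝ).map
      Polynomial.C).map F = vecMulVec bK vK := by
    ext i j; simp [vecMulVec_apply, hbK, hvK, hg]
  have hblkA21 : ((Matrix.of fun (_ : Fin 1) j => b j : Matrix (Fin 1) (Fin k) ℝ).map
      Polynomial.C).map F = vecMulVec vK bK := by
    ext i j; simp [vecMulVec_apply, hbK, hvK, hg]
  -- charpoly of C
  have hFC : F (Matrix.fromBlocks A₁ (Matrix.of fun i j => b i * u j)
      (Matrix.of fun i j => u i * b j) B).charpoly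
      = DK.det * (AK - (x - g μ₁)⁻¹ • vecMulVec bK bK).det := by
    rw [Matrix.charpoly, RingHom.map_det, RingHom.mapMatrix_apply, charmatrix_fromBlocks,
      Matrix.fromBlocks_map, aux_map_neg, aux_map_neg, hblkC12, hblkC21,
      aux_charmatrix_map A₁ F, aux_charmatrix_map B F, ← hx, ← hg, ← hDK, ← hAK,
      Matrix.det_fromBlocks₂₂]
    congr 2
    rw [Matrix.neg_mul, Matrix.neg_mul, Matrix.mul_neg, neg_neg, aux_sandwich, hkeyK]
  -- charpoly of A
  have hFA : F (Matrix.fromBlocks A₁ (Matrix.of fun i (_ : Fin 1) => b i)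
      (Matrix.of fun (_ : Fin 1) j => b j) (Matrix.of fun _ _ => μ₁)).charpoly
      = DA.det * (AK - (x - g μ₁)⁻¹ • vecMulVec bK bK).det := by
    rw [Matrix.charpoly, RingHom.map_det, RingHom.mapMatrix_apply, charmatrix_fromBlocks,
      Matrix.fromBlocks_map, aux_map_neg, aux_map_neg, hblkA12, hblkA21,
      aux_charmatrix_map A₁ F, aux_charmatrix_map _ F, ← hx, ← hg, ← hDA, ← hAK,
      Matrix.det_fromBlocks₂₂]
    congr 2
    rw [Matrix.neg_mul, Matrix.neg_mul, Matrix.mul_neg, neg_neg, aux_sandwich, hkeyA]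
  rw [F.map_mul, F.map_mul, hFC, hFA, hFB, ← hxsub, hDAdet]
  ring
end

section
/- In the setting of the joining lemma, the eigenvectors of C = [[A_1, b u^T],[u b^T, B]] are as follows: if (v_i; α_i) is an eigenvector of A = [[A_1, b],[b^T, μ_1]] for λ_i, then (v_i; α_i u) is an eigenvector of C for λ_i; and if u_i ⊥ u is an eigenvector of B for μ_i (i ≥ 2), then (0; u_i) is an eigenvector of C for μ_i. -/
open Matrix

theorem stmt_11 (k m : ℕ) (A₁ : Matrix (Fin k) (Fin k) ℝ) (hA₁ : A₁.IsSymm)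
    (b : Fin k → ℝ) (μ₁ : ℝ) (B : Matrix (Fin m) (Fin m) ℝ) (hB : B.IsSymm)
    (u : Fin m → ℝ) (hu : u ⬝ᵥ u = 1) (hBu : B *ᵥ u = μ₁ • u)
    (A : Matrix (Fin k ⊕ Fin 1) (Fin k ⊕ Fin 1) ℝ)
    (hA : A = Matrix.fromBlocks A₁ (Matrix.of fun i (_ : Fin 1) => b i)
        (Matrix.of fun (_ : Fin 1) j => b j) (Matrix.of fun _ _ => μ₁))
    (C : Matrix (Fin k ⊕ Fin m) (Fin k ⊕ Fin m) ℝ)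
    (hC : C = Matrix.fromBlocks A₁ (Matrix.of fun i j => b i * u j)
        (Matrix.of fun i j => u i * b j) B) :
    (∀ (v : Fin k → ℝ) (α lam : ℝ),
      A *ᵥ Sum.elim v (fun _ => α) = lam • Sum.elim v (fun _ => α) →
      C *ᵥ Sum.elim v (fun i => α * u i) = lam • Sum.elim v (fun i => α * u i)) ∧
    (∀ (z : Fin m → ℝ) (μ : ℝ),
      B *ᵥ z = μ • z → u ⬝ᵥ z = 0 →
      C *ᵥ Sum.elim (0 : Fin k → ℝ) z = μ • Sum.elim (0 : Fin k → ℝ) z) := by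
  subst hA hC
  constructor
  · intro v α lam h
    have h1 : ∀ i, (A₁ *ᵥ v) i + b i * α = lam * v i := by
      intro i
      have := congrFun h (Sum.inl i)
      simpa [fromBlocks_mulVec, mulVec, dotProduct] using this
    have h2 : b ⬝ᵥ v + μ₁ * α = lam * α := by
      have := congrFun h (Sum.inr 0)
      simpa [fromBlocks_mulVec, mulVec, dotProduct] using this
    have key1 : (Matrix.of fun i j => b i * u j) *ᵥ (fun i => α * u i)
        = fun i => b i * α := by
      funext i
      simp only [mulVec, dotProduct, of_apply]
      have : ∀ j, b i * u j * (α * u j) = (b i * α) * (u j * u j) := fun j => by ring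
      simp_rw [this, ← Finset.mul_sum]
      simp only [dotProduct] at hu
      rw [hu, mul_one]
    have key2 : (Matrix.of fun i j => u i * b j) *ᵥ v = fun j => u j * (b ⬝ᵥ v) := by
      funext j
      simp only [mulVec, dotProduct, of_apply]
      simp_rw [mul_assoc, ← Finset.mul_sum]
    have key3 : B *ᵥ (fun i => α * u i) = fun j => α * (μ₁ * u j) := by
      have : (fun i => α * u i) = α • u := by funext i; simp
      rw [this, mulVec_smul, hBu]
      funext j; simp [mul_comm]
    rw [fromBlocks_mulVec]
    simp only [Sum.elim_comp_inl, Sum.elim_comp_inr]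
    rw [key1, key2, key3]
    funext x
    cases x with
    | inl i =>
      simp only [Sum.elim_inl, Pi.add_apply, Pi.smul_apply, smul_eq_mul]
      linarith [h1 i]
    | inr j =>
      simp only [Sum.elim_inr, Pi.add_apply, Pi.smul_apply, smul_eq_mul]
      have h3 : b ⬝ᵥ v = lam * α - μ₁ * α := by linarith
      rw [h3]; ring
  · intro z μ hz huz
    have key1 : (Matrix.of fun i j => b i * u j) *ᵥ z = fun i => b i * (u ⬝ᵥ z) := by
      funext i
      simp only [mulVec, dotProduct, of_apply]
      simp_rw [mul_assoc, ← Finset.mul_sum]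
    rw [fromBlocks_mulVec]
    simp only [Sum.elim_comp_inl, Sum.elim_comp_inr]
    rw [key1, huz, hz]
    funext x
    cases x with
    | inl i => simp
    | inr j => simp
end

section
/- Let G be a graph on n vertices that allows the characteristic polynomial a square (there exists A ∈ S(G) with characteristic polynomial a square of a real polynomial). Fix a vertex v of G and m ≥ 0, and let G' be the graph obtained from G by replacing v with a clique K_{2m+1}, each of whose vertices is adjacent to exactly the neighbours of v in G. Then G' allows the characteristic polynomial a square. -/
open Polynomial

set_option maxHeartbeats 1600000 in
theorem stmt_12 (n m : ℕ) (G : SimpleGraph (Fin n)) (v : Fin n)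
    (h : ∃ A : Matrix (Fin n) (Fin n) ℝ, A.IsSymm ∧
      (∀ i j : Fin n, i ≠ j → (A i j ≠ 0 ↔ G.Adj i j)) ∧
      ∃ g : Polynomial ℝ, A.charpoly = g ^ 2) :
    ∃ C : Matrix (Fin n ⊕ Fin (2 * m)) (Fin n ⊕ Fin (2 * m)) ℝ, C.IsSymm ∧
      (∀ i j : Fin n, i ≠ j → (C (Sum.inl i) (Sum.inl j) ≠ 0 ↔ G.Adj i j)) ∧
      (∀ (i : Fin n) (j : Fin (2 * m)),
        C (Sum.inl i) (Sum.inr j) ≠ 0 ↔ (G.Adj i v ∨ i = v)) ∧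
      (∀ i j : Fin (2 * m), i ≠ j → C (Sum.inr i) (Sum.inr j) ≠ 0) ∧
      ∃ g : Polynomial ℝ, C.charpoly = g ^ 2 := by
  classical
  obtain ⟨A, hAs, hAadj, g, hg⟩ := h
  have hA : ∀ i j, A j i = A i j := fun i j => congrFun (congrFun hAs i) j
  -- constants
  obtain ⟨K, hKdef⟩ : ∃ K : ℝ, K = 2 * (m : ℝ) + 1 := ⟨_, rfl⟩
  have hm0 : (0:ℝ) ≤ 2 * (m:ℝ) := by positivity
  have hKpos : (0:ℝ) < K := by rw [hKdef]; linarith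
  have hsqrt : (0:ℝ) < Real.sqrt K := Real.sqrt_pos.mpr hKpos
  obtain ⟨t, htdef⟩ : ∃ t : ℝ, t = 1 / Real.sqrt K := ⟨_, rfl⟩
  have ht : 0 < t := by rw [htdef]; positivity
  have ht2 : t ^ 2 * K = 1 := by
    rw [htdef, div_pow, one_pow, Real.sq_sqrt hKpos.le]
    field_simp
  have hKexp : t ^ 2 * (2 * (m:ℝ) + 1) = 1 := by rw [← hKdef]; exact ht2
  obtain ⟨c, hcdef⟩ : ∃ c : ℝ, c = (1 + t) / (2 * (m:ℝ)) := ⟨_, rfl⟩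
  -- identities valid when Fin (2*m) is inhabited
  have h2m : ∀ _j : Fin (2 * m), (0:ℝ) < 2 * (m:ℝ) := by
    intro j
    have hj := j.pos
    have h1 : (0:ℝ) < ((2 * m : ℕ) : ℝ) := by exact_mod_cast hj
    push_cast at h1
    linarith
  have hc1 : ∀ _j : Fin (2 * m), 2 * (m:ℝ) * c = 1 + t := by
    intro j
    rw [hcdef]
    field_simp [(h2m j).ne']
    exact div_self (ne_of_gt (by linarith [h2m j]))
  have hcard : ((2 * m : ℕ) : ℝ) = 2 * (m : ℝ) := by push_cast; ring
  obtain ⟨a, hadef⟩ : ∃ a : ℝ, a = A v v := ⟨_, rfl⟩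
  -- blocks of the orthogonal symmetric matrix S
  obtain ⟨S11, hS11def⟩ : ∃ S11 : Matrix (Fin n) (Fin n) ℝ,
    S11 = fun i j => if i = v ∧ j = v then t else if i = j then 1 else 0 := ⟨_, rfl⟩
  obtain ⟨S12, hS12def⟩ : ∃ S12 : Matrix (Fin n) (Fin (2 * m)) ℝ,
    S12 = fun i _ => if i = v then t else 0 := ⟨_, rfl⟩
  obtain ⟨S21, hS21def⟩ : ∃ S21 : Matrix (Fin (2 * m)) (Fin n) ℝ,
    S21 = fun _ j => if j = v then t else 0 := ⟨_, rfl⟩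
  obtain ⟨S22, hS22def⟩ : ∃ S22 : Matrix (Fin (2 * m)) (Fin (2 * m)) ℝ,
    S22 = fun j j' => (if j = j' then 1 else 0) - c := ⟨_, rfl⟩
  obtain ⟨D, hDdef⟩ : ∃ D : Matrix (Fin (2 * m)) (Fin (2 * m)) ℝ,
    D = Matrix.diagonal (fun _ => a - K) := ⟨_, rfl⟩
  obtain ⟨S, hSdef⟩ : ∃ S : Matrix (Fin n ⊕ Fin (2 * m)) (Fin n ⊕ Fin (2 * m)) ℝ,
    S = Matrix.fromBlocks S11 S12 S21 S22 := ⟨_, rfl⟩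
  obtain ⟨M, hMdef⟩ : ∃ M : Matrix (Fin n ⊕ Fin (2 * m)) (Fin n ⊕ Fin (2 * m)) ℝ,
    M = Matrix.fromBlocks A 0 0 D := ⟨_, rfl⟩
  -- rows/columns of S11
  have hS11row : ∀ x, S11 v x = if x = v then t else 0 := by
    intro x
    by_cases hx : x = v <;> simp [hS11def, hx, Ne.symm]
  have hS11row' : ∀ i, i ≠ v → ∀ x, S11 i x = if i = x then 1 else 0 := by
    intro i hi x
    simp [hS11def, hi]
  have hS11col : ∀ x, S11 x v = if x = v then t else 0 := by
    intro x
    by_cases hx : x = v <;> simp [hS11def, hx]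
  have hS11col' : ∀ j, j ≠ v → ∀ x, S11 x j = if x = j then 1 else 0 := by
    intro j hj x
    by_cases hx : x = j
    · rw [hx]
      simp [hS11def, hj]
    · by_cases hxv : x = v <;> simp [hS11def, hxv, hj, hx]
  -- sum collapse helpers
  have sumconst : ∀ r : ℝ, (∑ _x : Fin (2 * m), r) = 2 * (m:ℝ) * r := by
    intro r
    rw [Finset.sum_const, Finset.card_univ, Fintype.card_fin, nsmul_eq_mul, hcard]
  have rowv : ∀ f : Fin n → ℝ, (∑ x, S11 v x * f x) = t * f v := by
    intro f
    simp only [hS11row, ite_mul, zero_mul]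
    simp
  have rowi : ∀ (i : Fin n), i ≠ v → ∀ f : Fin n → ℝ, (∑ x, S11 i x * f x) = f i := by
    intro i hi f
    simp only [hS11row' i hi, ite_mul, zero_mul, one_mul]
    simp
  have rowS11 : ∀ (i : Fin n) (f : Fin n → ℝ),
      (∑ x, S11 i x * f x) = if i = v then t * f v else f i := by
    intro i f
    by_cases hi : i = v
    · rw [if_pos hi, hi, rowv]
    · rw [if_neg hi, rowi i hi]
  have rowS12 : ∀ (i : Fin n) (f : Fin (2 * m) → ℝ),
      (∑ x, S12 i x * f x) = if i = v then t * (∑ x, f x) else 0 := by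
    intro i f
    simp only [hS12def, ite_mul, zero_mul]
    by_cases hi : i = v
    · simp only [hi, if_pos rfl]
      exact (Finset.mul_sum _ _ _).symm
    · simp [hi]
  have rowS21 : ∀ (_j : Fin (2 * m)) (f : Fin n → ℝ), (∑ x, S21 _j x * f x) = t * f v := by
    intro j f
    simp only [hS21def, ite_mul, zero_mul]
    simp
  have hS22sum : ∀ j' : Fin (2 * m), (∑ x, S22 x j') = -t := by
    intro j'
    have hmpos := h2m j'
    have h1 := hc1 j'
    simp only [hS22def]
    rw [Finset.sum_sub_distrib]
    simp only [Finset.sum_ite_eq', Finset.mem_univ, if_true]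
    rw [sumconst c]
    linarith
  have hS22sum' : ∀ j : Fin (2 * m), (∑ x, S22 j x) = -t := by
    intro j
    have hmpos := h2m j
    have h1 := hc1 j
    simp only [hS22def]
    rw [Finset.sum_sub_distrib]
    simp only [Finset.sum_ite_eq, Finset.mem_univ, if_true]
    rw [sumconst c]
    linarith
  have rowS22c : ∀ (j : Fin (2 * m)) (r : ℝ), (∑ x, S22 j x * r) = -t * r := by
    intro j r
    rw [← Finset.sum_mul, hS22sum' j]
  have hcc : ∀ _j : Fin (2 * m), 2 * (m:ℝ) * (c * c) - 2 * c = -t ^ 2 := by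
    intro j
    have hmpos := h2m j
    have h1 := hc1 j
    have h2 : 2 * (m:ℝ) * (c * c) = (1 + t) * c := by
      rw [← h1]; ring
    rw [h2]
    have h3 : ((1 + t) * c - 2 * c + t ^ 2) * (2 * (m:ℝ)) = 0 := by
      have he : ((1 + t) * c - 2 * c + t ^ 2) * (2 * (m:ℝ)) =
          (t - 1) * (2 * (m:ℝ) * c) + t ^ 2 * (2 * (m:ℝ)) := by ring
      rw [he, h1]
      nlinarith [hKexp]
    rcases mul_eq_zero.mp h3 with h | h
    · linarith
    · exact absurd h hmpos.ne'
  have hS22S22 : ∀ j j', (S22 * S22) j j' = (if j = j' then 1 else 0) - t ^ 2 := by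
    intro j j'
    have hcc' := hcc j
    rw [Matrix.mul_apply]
    have expand : ∀ x, S22 j x * S22 x j' =
        (if j = x then (if x = j' then (1:ℝ) else 0) else 0) - (if j = x then c else 0)
          - (if x = j' then c else 0) + c * c := by
      intro x
      simp only [hS22def]
      by_cases h1 : j = x <;> by_cases h2 : x = j'
      · simp only [if_pos h1, if_pos h2]; ring
      · simp only [if_pos h1, if_neg h2]; ring
      · simp only [if_neg h1, if_pos h2]; ring
      · simp only [if_neg h1, if_neg h2]; ring
    rw [Finset.sum_congr rfl (fun x _ => expand x)]
    rw [Finset.sum_add_distrib, Finset.sum_sub_distrib, Finset.sum_sub_distrib]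
    simp only [Finset.sum_ite_eq, Finset.sum_ite_eq', Finset.mem_univ, if_true]
    rw [sumconst (c * c)]
    by_cases hjj : j = j'
    · simp only [hjj, if_pos rfl]
      linarith
    · simp only [if_neg hjj]
      linarith
  -- the conjugated matrix, blockwise
  have hMS : M * S = Matrix.fromBlocks (A * S11) (A * S12) (D * S21) (D * S22) := by
    rw [hMdef, hSdef, Matrix.fromBlocks_multiply]
    simp [Matrix.zero_mul, Matrix.mul_zero]
  have hSMS : S * M * S = Matrix.fromBlocks
      (S11 * (A * S11) + S12 * (D * S21)) (S11 * (A * S12) + S12 * (D * S22))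
      (S21 * (A * S11) + S22 * (D * S21)) (S21 * (A * S12) + S22 * (D * S22)) := by
    rw [Matrix.mul_assoc, hMS, hSdef, Matrix.fromBlocks_multiply]
  -- simple products
  have hAS11 : ∀ i j, (A * S11) i j = if j = v then t * A i v else A i j := by
    intro i j
    rw [Matrix.mul_apply]
    by_cases hj : j = v
    · rw [hj, if_pos rfl]
      simp only [hS11col, mul_ite, mul_zero]
      simp [mul_comm]
    · simp only [hS11col' j hj, mul_ite, mul_zero, mul_one, if_neg hj]
      simp
  have hAS12 : ∀ i j, (A * S12) i j = t * A i v := by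
    intro i j
    rw [Matrix.mul_apply]
    simp only [hS12def, mul_ite, mul_zero]
    simp [mul_comm]
  have hDS21 : ∀ j i, (D * S21) j i = if i = v then (a - K) * t else 0 := by
    intro j i
    rw [hDdef, Matrix.diagonal_mul]
    simp [hS21def, mul_ite]
  have hDS22 : ∀ j j', (D * S22) j j' = (a - K) * S22 j j' := by
    intro j j'
    rw [hDdef, Matrix.diagonal_mul]
  -- entries of the four blocks
  have hB11 : ∀ i j, (S * M * S) (Sum.inl i) (Sum.inl j) =
      if i = v ∧ j = v then a - 2 * (m:ℝ)
      else if i = v then t * A v j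
      else if j = v then t * A i v else A i j := by
    intro i j
    rw [hSMS]
    simp only [Matrix.fromBlocks_apply₁₁, Matrix.add_apply]
    have e1 : (S11 * (A * S11)) i j =
        if i = v then t * ((A * S11) v j) else (A * S11) i j := by
      rw [Matrix.mul_apply, rowS11 i (fun x => (A * S11) x j)]
    have e2 : (S12 * (D * S21)) i j =
        if i = v then t * (∑ x : Fin (2 * m), (D * S21) x j) else 0 := by
      rw [Matrix.mul_apply, rowS12 i (fun x => (D * S21) x j)]
    rw [e1, e2]
    simp only [hAS11, hDS21]
    by_cases hi : i = v <;> by_cases hj : j = v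
    · simp only [hi, hj, and_self, if_true]
      rw [sumconst ((a - K) * t), ← hadef, hKdef]
      linear_combination (a - 2 * (m:ℝ)) * hKexp
    · simp only [hi, hj, and_false, if_true, if_false]
      simp
    · simp only [hi, hj, false_and, if_true, if_false]
      simp
    · simp only [hi, hj, false_and, if_false]
      simp
  have hB12 : ∀ i j, (S * M * S) (Sum.inl i) (Sum.inr j) =
      if i = v then 1 else t * A i v := by
    intro i j
    rw [hSMS]
    simp only [Matrix.fromBlocks_apply₁₂, Matrix.add_apply]
    have e1 : (S11 * (A * S12)) i j =
        if i = v then t * ((A * S12) v j) else (A * S12) i j := by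
      rw [Matrix.mul_apply, rowS11 i (fun x => (A * S12) x j)]
    have e2 : (S12 * (D * S22)) i j =
        if i = v then t * (∑ x : Fin (2 * m), (D * S22) x j) else 0 := by
      rw [Matrix.mul_apply, rowS12 i (fun x => (D * S22) x j)]
    have e3 : (∑ x : Fin (2 * m), (D * S22) x j) = (a - K) * (-t) := by
      simp only [hDS22]
      rw [← Finset.mul_sum, hS22sum j]
    rw [e1, e2, e3]
    simp only [hAS12]
    by_cases hi : i = v
    · simp only [hi, if_true]
      rw [← hadef]
      linear_combination ht2
    · simp only [hi, if_false, add_zero]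
  have hB21 : ∀ j i, (S * M * S) (Sum.inr j) (Sum.inl i) =
      if i = v then 1 else t * A v i := by
    intro j i
    rw [hSMS]
    simp only [Matrix.fromBlocks_apply₂₁, Matrix.add_apply]
    have e1 : (S21 * (A * S11)) j i = t * ((A * S11) v i) := by
      rw [Matrix.mul_apply, rowS21 j (fun x => (A * S11) x i)]
    have e2 : (S22 * (D * S21)) j i = if i = v then -t * ((a - K) * t) else 0 := by
      rw [Matrix.mul_apply]
      simp only [hDS21]
      by_cases hi : i = v
      · simp only [hi, if_true]
        exact rowS22c j ((a - K) * t)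
      · simp only [hi, if_false, mul_zero]
        simp
    rw [e1, e2, hAS11]
    by_cases hi : i = v
    · simp only [hi, if_true]
      rw [← hadef]
      linear_combination ht2
    · simp only [hi, if_false, add_zero]
  have hB22 : ∀ j j', (S * M * S) (Sum.inr j) (Sum.inr j') =
      if j = j' then a - 2 * (m:ℝ) else 1 := by
    intro j j'
    rw [hSMS]
    simp only [Matrix.fromBlocks_apply₂₂, Matrix.add_apply]
    have e1 : (S21 * (A * S12)) j j' = t * ((A * S12) v j') := by
      rw [Matrix.mul_apply, rowS21 j (fun x => (A * S12) x j')]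
    have e2 : (S22 * (D * S22)) j j' = (a - K) * ((S22 * S22) j j') := by
      rw [Matrix.mul_apply, Matrix.mul_apply, Finset.mul_sum]
      refine Finset.sum_congr rfl fun x _ => ?_
      rw [hDS22]
      ring
    rw [e1, e2, hS22S22, hAS12, ← hadef]
    by_cases hjj : j = j'
    · simp only [hjj, eq_self_iff_true, if_true]
      rw [hKdef]
      linear_combination hKexp
    · simp only [if_neg hjj]
      linear_combination ht2
  -- S is an involution
  have hSS : S * S = 1 := by
    rw [hSdef, Matrix.fromBlocks_multiply]
    have h11 : S11 * S11 + S12 * S21 = (1 : Matrix (Fin n) (Fin n) ℝ) := by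
      ext i j
      have e1 : (S11 * S11) i j = if i = v then t * S11 v j else S11 i j := by
        rw [Matrix.mul_apply, rowS11 i (fun x => S11 x j)]
      have e2 : (S12 * S21) i j =
          if i = v then t * (∑ _x : Fin (2 * m), (if j = v then t else 0)) else 0 := by
        rw [Matrix.mul_apply, rowS12 i (fun x => S21 x j)]
        simp only [hS21def]
      rw [Matrix.add_apply, e1, e2]
      by_cases hi : i = v <;> by_cases hj : j = v
      · simp only [hi, hj, if_true]
        rw [hS11row, if_pos rfl, sumconst t, Matrix.one_apply, if_pos (hi.trans hj.symm)]
        linear_combination hKexp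
      · simp only [hi, hj, if_true, if_false]
        rw [hS11row, if_neg hj, sumconst (0:ℝ),
          Matrix.one_apply_ne (fun hh : i = j => hj (hh.symm.trans hi))]
        ring
      · simp only [hi, hj, if_false]
        rw [hS11col, if_neg hi,
          Matrix.one_apply_ne (fun hh : i = j => hi (hh.trans hj)), add_zero]
      · simp only [hi, if_false]
        rw [hS11row' i hi, Matrix.one_apply, add_zero]
    have h12 : S11 * S12 + S12 * S22 = (0 : Matrix (Fin n) (Fin (2 * m)) ℝ) := by
      ext i j
      have e1 : (S11 * S12) i j = if i = v then t * S12 v j else S12 i j := by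
        rw [Matrix.mul_apply, rowS11 i (fun x => S12 x j)]
      have e2 : (S12 * S22) i j = if i = v then t * (-t) else 0 := by
        rw [Matrix.mul_apply, rowS12 i (fun x => S22 x j)]
        rw [hS22sum j]
      rw [Matrix.add_apply, e1, e2]
      by_cases hi : i = v
      · rw [if_pos hi, if_pos hi, hS12def]
        simp only [eq_self_iff_true, if_true, Matrix.zero_apply]
        ring
      · rw [if_neg hi, if_neg hi, hS12def]
        simp only [Matrix.zero_apply, if_neg hi, add_zero]
    have h21 : S21 * S11 + S22 * S21 = (0 : Matrix (Fin (2 * m)) (Fin n) ℝ) := by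
      ext j i
      have e1 : (S21 * S11) j i = t * S11 v i := by
        rw [Matrix.mul_apply, rowS21 j (fun x => S11 x i)]
      have e2 : (S22 * S21) j i = if i = v then -t * t else 0 := by
        rw [Matrix.mul_apply]
        simp only [hS21def]
        by_cases hi : i = v
        · simp only [hi, if_true]
          exact rowS22c j t
        · simp only [hi, if_false, mul_zero]
          simp
      rw [Matrix.add_apply, e1, e2, hS11row]
      by_cases hi : i = v
      · simp only [hi, if_true, Matrix.zero_apply]
        ring
      · simp only [hi, if_false, Matrix.zero_apply, mul_zero, add_zero]
    have h22 : S21 * S12 + S22 * S22 = (1 : Matrix (Fin (2 * m)) (Fin (2 * m)) ℝ) := by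
      ext j j'
      have e1 : (S21 * S12) j j' = t * t := by
        rw [Matrix.mul_apply, rowS21 j (fun x => S12 x j')]
        simp [hS12def]
      rw [Matrix.add_apply, e1, hS22S22, Matrix.one_apply]
      by_cases hjj : j = j'
      · simp only [hjj, if_pos rfl]
        ring
      · simp only [if_neg hjj]
        ring
    rw [h11, h12, h21, h22, ← Matrix.fromBlocks_one]
  -- symmetry
  have hS11symm : ∀ p q, S11 p q = S11 q p := by
    intro p q
    by_cases hp : p = v <;> by_cases hq : q = v
    · rw [hp, hq]
    · rw [hp, hS11row q, hS11col q]
    · rw [hq, hS11col p, hS11row p]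
    · rw [hS11row' p hp q, hS11row' q hq p]
      by_cases hpq : p = q
      · rw [hpq]
      · rw [if_neg hpq, if_neg (fun hh : q = p => hpq hh.symm)]
  have hSsym : S.IsSymm := by
    rw [Matrix.IsSymm]
    ext x y
    rcases x with i | j <;> rcases y with i' | j'
    · simp only [Matrix.transpose_apply, hSdef, Matrix.fromBlocks_apply₁₁]
      exact hS11symm i' i
    · simp only [Matrix.transpose_apply, hSdef, Matrix.fromBlocks_apply₁₂,
        Matrix.fromBlocks_apply₂₁]
      simp only [hS12def, hS21def]
    · simp only [Matrix.transpose_apply, hSdef, Matrix.fromBlocks_apply₁₂,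
        Matrix.fromBlocks_apply₂₁]
      simp only [hS12def, hS21def]
    · simp only [Matrix.transpose_apply, hSdef, Matrix.fromBlocks_apply₂₂]
      simp only [hS22def]
      by_cases h1 : j = j' <;> simp [h1, eq_comm]
  have hMsym : M.IsSymm := by
    rw [Matrix.IsSymm]
    ext x y
    rcases x with i | j <;> rcases y with i' | j'
    · simp only [Matrix.transpose_apply, hMdef, Matrix.fromBlocks_apply₁₁]
      exact hA i i'
    · simp [hMdef]
    · simp [hMdef]
    · simp only [Matrix.transpose_apply, hMdef, Matrix.fromBlocks_apply₂₂, hDdef,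
        Matrix.diagonal_apply]
      by_cases h1 : j = j' <;> simp [h1, eq_comm]
  have hCsym : (S * M * S).IsSymm := by
    rw [Matrix.IsSymm, Matrix.transpose_mul, Matrix.transpose_mul, hSsym.eq, hMsym.eq,
      Matrix.mul_assoc]
  -- the characteristic polynomial
  have hSS' : (S.map (Polynomial.C : ℝ →+* ℝ[X])) * (S.map Polynomial.C) = 1 := by
    rw [← Matrix.map_mul, hSS]
    exact Matrix.map_one _ (map_zero _) (map_one _)
  have hcharC : (S * M * S).charpoly = M.charpoly := by
    have key : (S * M * S).charmatrix =
        (S.map Polynomial.C) * M.charmatrix * (S.map Polynomial.C) := by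
      have h1 : (S * M * S).charmatrix =
          Matrix.scalar _ (X : ℝ[X]) - (S * M * S).map Polynomial.C := by
        rw [Matrix.charmatrix, RingHom.mapMatrix_apply]
      have h2 : M.charmatrix = Matrix.scalar _ (X : ℝ[X]) - M.map Polynomial.C := by
        rw [Matrix.charmatrix, RingHom.mapMatrix_apply]
      rw [h1, h2, Matrix.mul_sub, Matrix.sub_mul]
      have hc := (Matrix.scalar_commute (X : ℝ[X]) (fun r' => Commute.all _ r')
        (S.map Polynomial.C)).eq
      congr 1
      · calc Matrix.scalar _ (X : ℝ[X])
            = Matrix.scalar _ (X : ℝ[X]) * ((S.map Polynomial.C) * (S.map Polynomial.C)) := by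
              rw [hSS', Matrix.mul_one]
          _ = (Matrix.scalar _ (X : ℝ[X]) * (S.map Polynomial.C)) * (S.map Polynomial.C) := by
              rw [Matrix.mul_assoc]
          _ = (S.map Polynomial.C) * Matrix.scalar _ (X : ℝ[X]) * (S.map Polynomial.C) := by
              rw [hc]
      · rw [Matrix.map_mul, Matrix.map_mul]
    have hdet : (S.map (Polynomial.C : ℝ →+* ℝ[X])).det * (S.map Polynomial.C).det = 1 := by
      rw [← Matrix.det_mul, hSS', Matrix.det_one]
    rw [Matrix.charpoly, Matrix.charpoly, key, Matrix.det_mul, Matrix.det_mul]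
    linear_combination M.charmatrix.det * hdet
  have hDchar : D.charpoly = (X - Polynomial.C (a - K)) ^ (2 * m) := by
    rw [hDdef, Matrix.charpoly_of_upperTriangular _ (Matrix.blockTriangular_diagonal _)]
    simp [Finset.prod_const, Finset.card_univ]
  have hcharM : M.charpoly = g ^ 2 * (X - Polynomial.C (a - K)) ^ (2 * m) := by
    rw [hMdef, Matrix.charpoly_fromBlocks_zero₂₁, hg, hDchar]
  -- conclusion
  refine ⟨S * M * S, hCsym, ?_, ?_, ?_, ?_⟩
  · intro i j hij
    rw [hB11 i j]
    by_cases hi : i = v <;> by_cases hj : j = v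
    · exact absurd (hi.trans hj.symm) hij
    · have hij' : v ≠ j := by rw [← hi]; exact hij
      simp only [hi, hj, and_false, if_true, if_false]
      constructor
      · intro hne
        have h0 : A v j ≠ 0 := by
          intro h0
          rw [h0, mul_zero] at hne
          exact hne rfl
        exact (hAadj v j hij').mp h0
      · intro hadj
        exact mul_ne_zero ht.ne' ((hAadj v j hij').mpr hadj)
    · have hij' : i ≠ v := by rw [← hj] at hi ⊢; exact hij
      simp only [hi, hj, false_and, if_false, if_true]
      constructor
      · intro hne
        have h0 : A i v ≠ 0 := by
          intro h0
          rw [h0, mul_zero] at hne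
          exact hne rfl
        exact (hAadj i v hij').mp h0
      · intro hadj
        exact mul_ne_zero ht.ne' ((hAadj i v hij').mpr hadj)
    · simp only [hi, hj, false_and, if_false]
      exact hAadj i j hij
  · intro i j
    rw [hB12 i j]
    by_cases hi : i = v
    · simp only [hi, if_true]
      simp
    · simp only [hi, if_false]
      constructor
      · intro hne
        left
        have h0 : A i v ≠ 0 := by
          intro h0
          rw [h0, mul_zero] at hne
          exact hne rfl
        exact (hAadj i v hi).mp h0
      · intro hadj
        rcases hadj with hadj | hadj
        · exact mul_ne_zero ht.ne' ((hAadj i v hi).mpr hadj)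
        · exact hadj.elim
  · intro i j hij
    rw [hB22 i j, if_neg hij]
    exact one_ne_zero
  · refine ⟨g * (X - Polynomial.C (a - K)) ^ m, ?_⟩
    rw [hcharC, hcharM, mul_pow, ← pow_mul, Nat.mul_comm m 2]
end

section
/- Let A = [[A_1, a],[a^T, 2]] be symmetric with characteristic polynomial p(x), and B = [[B_1, b],[b^T, 0]] symmetric with characteristic polynomial q(x). Then the symmetric matrix C = [[B_1, 0, (√2/2)b, -(√2/2)b], [0, A_1, (√2/2)a, (√2/2)a], [(√2/2)b^T, (√2/2)a^T, 1, 1], [-(√2/2)b^T, (√2/2)a^T, 1, 1]] has characteristic polynomial p(x)·q(x). -/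
open Polynomial Matrix

lemma my_charpoly_conj {n : Type*} [Fintype n] [DecidableEq n]
    (U M : Matrix n n ℝ) (h : U * Uᵀ = 1) :
    (U * M * Uᵀ).charpoly = M.charpoly := by
  have key : charmatrix (U * M * Uᵀ) =
      (U.map Polynomial.C) * charmatrix M * (Uᵀ.map Polynomial.C) := by
    simp only [charmatrix, RingHom.mapMatrix_apply, mul_sub, sub_mul]
    congr 1
    · rw [Matrix.mul_assoc,
        scalar_commute (X : ℝ[X]) (fun r' => mul_comm _ r') (Uᵀ.map Polynomial.C),
        ← Matrix.mul_assoc, ← Matrix.map_mul, h]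
      simp
    · simp [Matrix.map_mul]
  have hdet : (U.map (Polynomial.C : ℝ →+* ℝ[X])).det * (Uᵀ.map Polynomial.C).det = 1 := by
    rw [← det_mul, ← Matrix.map_mul, h]
    simp
  unfold Matrix.charpoly
  rw [key, det_mul, det_mul]
  rw [mul_comm, ← mul_assoc, mul_comm ((Uᵀ.map _).det), hdet, one_mul]


lemma my_reindex_aux (k l : ℕ)
    (P₁ : Matrix (Fin k) (Fin k) ℝ) (p₁₂ : Matrix (Fin k) (Fin 1) ℝ)
    (p₂₁ : Matrix (Fin 1) (Fin k) ℝ) (p₂₂ : Matrix (Fin 1) (Fin 1) ℝ)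
    (Q₁ : Matrix (Fin l) (Fin l) ℝ) (q₁₂ : Matrix (Fin l) (Fin 1) ℝ)
    (q₂₁ : Matrix (Fin 1) (Fin l) ℝ) (q₂₂ : Matrix (Fin 1) (Fin 1) ℝ) :
    Matrix.reindex
      ((Equiv.sumSumSumComm (Fin k) (Fin 1) (Fin l) (Fin 1)).trans
        (Equiv.sumCongr (Equiv.sumComm (Fin k) (Fin l)) (Equiv.refl _)))
      ((Equiv.sumSumSumComm (Fin k) (Fin 1) (Fin l) (Fin 1)).trans
        (Equiv.sumCongr (Equiv.sumComm (Fin k) (Fin l)) (Equiv.refl _)))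
      (Matrix.fromBlocks (Matrix.fromBlocks P₁ p₁₂ p₂₁ p₂₂) 0 0
        (Matrix.fromBlocks Q₁ q₁₂ q₂₁ q₂₂)) =
    Matrix.fromBlocks (Matrix.fromBlocks Q₁ 0 0 P₁)
      (Matrix.fromBlocks 0 q₁₂ p₁₂ 0)
      (Matrix.fromBlocks 0 p₂₁ q₂₁ 0)
      (Matrix.fromBlocks p₂₂ 0 0 q₂₂) := by
  ext i j
  rcases i with (i | i) | (x | x) <;> rcases j with (j | j) | (y | y) <;>
    simp [Equiv.sumSumSumComm, Matrix.fromBlocks]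


theorem stmt_13 (k l : ℕ) (A₁ : Matrix (Fin k) (Fin k) ℝ) (hA₁ : A₁.IsSymm) (a : Fin k → ℝ)
    (B₁ : Matrix (Fin l) (Fin l) ℝ) (hB₁ : B₁.IsSymm) (b : Fin l → ℝ)
    (A : Matrix (Fin k ⊕ Fin 1) (Fin k ⊕ Fin 1) ℝ)
    (hA : A = Matrix.fromBlocks A₁ (Matrix.of fun i (_ : Fin 1) => a i)
        (Matrix.of fun (_ : Fin 1) j => a j) (Matrix.of fun _ _ => (2 : ℝ)))
    (B : Matrix (Fin l ⊕ Fin 1) (Fin l ⊕ Fin 1) ℝ)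
    (hB : B = Matrix.fromBlocks B₁ (Matrix.of fun i (_ : Fin 1) => b i)
        (Matrix.of fun (_ : Fin 1) j => b j) (Matrix.of fun _ _ => (0 : ℝ)))
    (C : Matrix ((Fin l ⊕ Fin k) ⊕ (Fin 1 ⊕ Fin 1)) ((Fin l ⊕ Fin k) ⊕ (Fin 1 ⊕ Fin 1)) ℝ)
    (hC : C = Matrix.fromBlocks
      (Matrix.fromBlocks B₁ 0 0 A₁)
      (Matrix.fromBlocks
        (Matrix.of fun i (_ : Fin 1) => Real.sqrt 2 / 2 * b i)
        (Matrix.of fun i (_ : Fin 1) => -(Real.sqrt 2 / 2) * b i)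
        (Matrix.of fun i (_ : Fin 1) => Real.sqrt 2 / 2 * a i)
        (Matrix.of fun i (_ : Fin 1) => Real.sqrt 2 / 2 * a i))
      (Matrix.fromBlocks
        (Matrix.of fun (_ : Fin 1) j => Real.sqrt 2 / 2 * b j)
        (Matrix.of fun (_ : Fin 1) j => Real.sqrt 2 / 2 * a j)
        (Matrix.of fun (_ : Fin 1) j => -(Real.sqrt 2 / 2) * b j)
        (Matrix.of fun (_ : Fin 1) j => Real.sqrt 2 / 2 * a j))
      (Matrix.of fun (_ : Fin 1 ⊕ Fin 1) (_ : Fin 1 ⊕ Fin 1) => (1 : ℝ))) :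
    C.charpoly = A.charpoly * B.charpoly := by
  have h2 : Real.sqrt 2 * Real.sqrt 2 = 2 := Real.mul_self_sqrt (by norm_num)
  set s : ℝ := Real.sqrt 2 / 2 with hs
  have hs2 : s * s = 1 / 2 := by rw [hs, div_mul_div_comm, h2]; norm_num
  set c1 : Matrix (Fin 1) (Fin 1) ℝ := Matrix.of fun _ _ => s with hc1
  set c2 : Matrix (Fin 1) (Fin 1) ℝ := Matrix.of fun _ _ => -s with hc2
  set R : Matrix (Fin 1 ⊕ Fin 1) (Fin 1 ⊕ Fin 1) ℝ := Matrix.fromBlocks c1 c1 c1 c2 with hR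
  have hRT : Rᵀ = R := by
    rw [hR, fromBlocks_transpose]
    congr 1 <;> ext i j <;> simp [hc1, hc2]
  have hRR : R * R = 1 := by
    ext i j
    rcases i with x | x <;> rcases j with y | y <;> fin_cases x <;> fin_cases y <;>
      simp [hR, hc1, hc2, Matrix.mul_apply, Fintype.sum_sum_type, Fin.sum_univ_one,
        Matrix.one_apply, Matrix.fromBlocks] <;>
      nlinarith [hs2]
  set U : Matrix ((Fin l ⊕ Fin k) ⊕ (Fin 1 ⊕ Fin 1)) ((Fin l ⊕ Fin k) ⊕ (Fin 1 ⊕ Fin 1)) ℝ :=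
    Matrix.fromBlocks 1 0 0 R with hU
  have hUT : Uᵀ = U := by
    rw [hU, fromBlocks_transpose, hRT]
    congr 1 <;> simp
  have hUU : U * Uᵀ = 1 := by
    rw [hUT, hU, fromBlocks_multiply, ← fromBlocks_one]
    simp [hRR]
  -- block-diagonal-like matrix M
  set M : Matrix ((Fin l ⊕ Fin k) ⊕ (Fin 1 ⊕ Fin 1)) ((Fin l ⊕ Fin k) ⊕ (Fin 1 ⊕ Fin 1)) ℝ :=
    Matrix.fromBlocks (Matrix.fromBlocks B₁ 0 0 A₁)
      (Matrix.fromBlocks 0 (Matrix.of fun i (_ : Fin 1) => b i)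
        (Matrix.of fun i (_ : Fin 1) => a i) 0)
      (Matrix.fromBlocks 0 (Matrix.of fun (_ : Fin 1) j => a j)
        (Matrix.of fun (_ : Fin 1) j => b j) 0)
      (Matrix.fromBlocks (Matrix.of fun _ _ => (2 : ℝ)) 0 0 (Matrix.of fun _ _ => (0 : ℝ))) with hM
  -- C = U * M * Uᵀ
  have hCM : C = U * M * Uᵀ := by
    rw [hUT, hU, hM, fromBlocks_multiply, fromBlocks_multiply]
    simp only [Matrix.one_mul, Matrix.mul_one, Matrix.zero_mul, Matrix.mul_zero,
      add_zero, zero_add]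
    rw [hC, hR]
    ext i j
    rcases i with (i | i) | (x | x) <;> rcases j with (j | j) | (y | y) <;>
      simp [hc1, hc2, Matrix.mul_apply, Fintype.sum_sum_type, Fin.sum_univ_one,
        Matrix.fromBlocks] <;>
      nlinarith [hs2]
  rw [hCM, my_charpoly_conj _ _ hUU, hM, hA, hB, ← my_reindex_aux, Matrix.charpoly_reindex,
    Matrix.charpoly_fromBlocks_zero₂₁]
end

section
/- For any list of real numbers λ_1, λ_2, ..., λ_n with λ_1 ≠ λ_2 and n ≥ 2, there exists a real symmetric n×n matrix A all of whose off-diagonal entries are nonzero (i.e., A ∈ S(K_n)) whose spectrum is exactly {λ_1,...,λ_n} (with multiplicity). -/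
open Polynomial Matrix Finset

lemma charpoly_conj_involutive {n : ℕ} (Q M : Matrix (Fin n) (Fin n) ℝ)
    (hQ : Q * Q = 1) : (Q * M * Q).charpoly = M.charpoly := by
  unfold Matrix.charpoly
  have hmap : (C : ℝ →+* ℝ[X]).mapMatrix Q * (C : ℝ →+* ℝ[X]).mapMatrix Q = 1 := by
    rw [← _root_.map_mul, hQ, _root_.map_one]
  have hcm : charmatrix (Q * M * Q) =
      (C : ℝ →+* ℝ[X]).mapMatrix Q * charmatrix M * (C : ℝ →+* ℝ[X]).mapMatrix Q := by
    unfold charmatrix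
    rw [mul_sub, sub_mul]
    congr 1
    · rw [scalar_apply, ← Matrix.smul_one_eq_diagonal, mul_smul_comm, smul_mul_assoc, mul_one,
        hmap]
    · rw [_root_.map_mul, _root_.map_mul]
  rw [hcm, det_mul, det_mul, mul_comm, ← mul_assoc, ← det_mul, hmap, det_one, one_mul]

lemma charpoly_diagonal'_s14 {n : ℕ} (d : Fin n → ℝ) :
    (Matrix.diagonal d).charpoly = ∏ i : Fin n, (X - Polynomial.C (d i)) := by
  unfold Matrix.charpoly
  have : charmatrix (Matrix.diagonal d) = Matrix.diagonal fun i => X - Polynomial.C (d i) := by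
    ext i j
    by_cases h : i = j
    · subst h; simp
    · simp [h, Matrix.diagonal_apply_ne _ h]
  rw [this, det_diagonal]


theorem stmt_14 (n : ℕ) (hn : 2 ≤ n) (lam : Fin n → ℝ)
    (hlam : lam ⟨0, by omega⟩ ≠ lam ⟨1, by omega⟩) :
    ∃ A : Matrix (Fin n) (Fin n) ℝ, A.IsSymm ∧
      (∀ i j : Fin n, i ≠ j → A i j ≠ 0) ∧
      A.charpoly = ∏ i : Fin n, (X - Polynomial.C (lam i)) := by
  set i0 : Fin n := ⟨0, by omega⟩
  set i1 : Fin n := ⟨1, by omega⟩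
  have hne : i0 ≠ i1 := by simp [i0, i1, Fin.ext_iff]
  have hd : lam i0 - lam i1 ≠ 0 := sub_ne_zero.mpr hlam
  have hnpos : (0:ℝ) < 1 / n := by positivity
  set Bad : Finset ℝ := Finset.image
    (fun p : Fin n × Fin n => ((lam p.1 + lam p.2) / 2 - (∑ k, lam k) / n) / (lam i0 - lam i1))
    Finset.univ with hBad
  obtain ⟨t, ht, htB⟩ :=
    (Set.Ioo_infinite (show -(1/(n:ℝ)) < 1/n by linarith)).exists_notMem_finset Bad
  obtain ⟨ht1, ht2⟩ := ht
  rw [one_div] at hnpos ht1 ht2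
  set w : Fin n → ℝ := fun k =>
    1 / n + (if k = i0 then t else 0) - (if k = i1 then t else 0) with hw
  have hwpos : ∀ k, 0 < w k := by
    intro k
    simp only [hw]
    by_cases h1 : k = i0 <;> by_cases h2 : k = i1
    · exact absurd (h1.symm.trans h2) hne
    all_goals simp [h1, h2, hne, Ne.symm hne] <;> linarith
  have hwsum : ∑ k, w k = 1 := by
    simp only [hw]
    rw [Finset.sum_sub_distrib, Finset.sum_add_distrib, Finset.sum_ite_eq' Finset.univ i0,
      Finset.sum_ite_eq' Finset.univ i1]
    simp [Finset.card_univ]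
    field_simp
  set v : Fin n → ℝ := fun k => Real.sqrt (w k) with hv
  have hvpos : ∀ k, 0 < v k := fun k => Real.sqrt_pos.mpr (hwpos k)
  have hv2 : ∀ k, v k * v k = w k := fun k => Real.mul_self_sqrt (hwpos k).le
  set s : ℝ := ∑ k, w k * lam k with hs
  have hs_eq : s = (∑ k, lam k) / n + t * (lam i0 - lam i1) := by
    have h1 : ∀ k ∈ Finset.univ, w k * lam k =
        1 / n * lam k + ((if k = i0 then t * lam i0 else 0) - (if k = i1 then t * lam i1 else 0)) := by
      intro k _
      simp only [hw]
      by_cases ha : k = i0 <;> by_cases hb : k = i1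
      · exact absurd (ha.symm.trans hb) hne
      all_goals simp [ha, hb, hne, Ne.symm hne] <;> ring
    rw [hs, Finset.sum_congr rfl h1, Finset.sum_add_distrib, Finset.sum_sub_distrib,
      Finset.sum_ite_eq' Finset.univ i0, Finset.sum_ite_eq' Finset.univ i1, ← Finset.mul_sum]
    simp
    ring
  have hs_ne : ∀ i j : Fin n, 2 * s ≠ lam i + lam j := by
    intro i j h
    apply htB
    rw [hBad]
    refine Finset.mem_image.mpr ⟨(i, j), Finset.mem_univ _, ?_⟩
    rw [div_eq_iff hd]
    rw [hs_eq] at h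
    linarith
  set P : Matrix (Fin n) (Fin n) ℝ := vecMulVec v v with hP
  set Q : Matrix (Fin n) (Fin n) ℝ := 1 - (2:ℝ) • P with hQdef
  have hPP : P * P = P := by
    ext i j
    simp only [hP, Matrix.mul_apply, vecMulVec_apply]
    have h1 : ∀ k ∈ Finset.univ, v i * v k * (v k * v j) = (v i * v j) * w k := by
      intro k _; rw [← hv2 k]; ring
    rw [Finset.sum_congr rfl h1, ← Finset.mul_sum, hwsum, mul_one]
  have hQQ : Q * Q = 1 := by
    have h1 : (2:ℝ) • P * ((2:ℝ) • P) = (2:ℝ) • P + (2:ℝ) • P := by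
      rw [smul_mul_assoc, mul_smul_comm, hPP, smul_smul, ← add_smul]
      norm_num
    rw [hQdef, sub_mul, mul_sub, mul_sub, h1]
    simp only [one_mul, mul_one]
    abel
  have hPsymm : Pᵀ = P := by
    ext i j
    rw [Matrix.transpose_apply, hP, vecMulVec_apply, vecMulVec_apply, mul_comm]
  have hQsymm : Qᵀ = Q := by rw [hQdef, transpose_sub, transpose_one, transpose_smul, hPsymm]
  refine ⟨Q * Matrix.diagonal lam * Q, ?_, ?_, ?_⟩
  · show _ᵀ = _
    rw [transpose_mul, transpose_mul, hQsymm, diagonal_transpose, mul_assoc]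
  · intro i j hij
    have hQapp : ∀ a b, Q a b = (if a = b then (1:ℝ) else 0) - 2 * (v a * v b) := by
      intro a b
      simp [hQdef, hP, Matrix.one_apply, vecMulVec_apply]
    have hentry : (Q * Matrix.diagonal lam * Q) i j
        = 2 * v i * v j * (2 * s - lam i - lam j) := by
      rw [Matrix.mul_apply]
      have hrow : ∀ k ∈ Finset.univ, (Q * Matrix.diagonal lam) i k * Q k j =
          (if k = i then -2 * (v i * v j) * lam i else 0) +
          (if k = j then -2 * (v i * v j) * lam j else 0) +
          (4 * (v i * v j)) * (w k * lam k) := by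
        intro k _
        rw [Matrix.mul_diagonal, hQapp, hQapp]
        by_cases h1 : k = i
        · subst h1
          rw [if_pos rfl, if_neg hij, if_pos rfl, if_neg hij, ← hv2 k]
          ring
        · by_cases h2 : k = j
          · subst h2
            rw [if_neg (fun h => h1 h.symm), if_pos rfl, if_neg h1, if_pos rfl, ← hv2 k]
            ring
          · rw [if_neg (fun h => h1 h.symm), if_neg h2, if_neg h1, if_neg h2, ← hv2 k]
            ring
      rw [Finset.sum_congr rfl hrow, Finset.sum_add_distrib, Finset.sum_add_distrib,
        Finset.sum_ite_eq' Finset.univ i, Finset.sum_ite_eq' Finset.univ j,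
        ← Finset.mul_sum, ← hs]
      simp only [Finset.mem_univ, if_true]
      ring
    rw [hentry]
    have h1 := hs_ne i j
    have h2 := (hvpos i).ne'
    have h3 := (hvpos j).ne'
    have h4 : 2 * s - lam i - lam j ≠ 0 := fun h => h1 (by linarith)
    positivity
  · rw [charpoly_conj_involutive Q _ hQQ, charpoly_diagonal'_s14]
end

section
/- For every graph G on n-1 vertices, the join G ∨ K_{n+1} (add n+1 mutually adjacent new vertices, each adjacent to all vertices of G) allows the characteristic polynomial a square: there exists a matrix in S(G ∨ K_{n+1}) whose characteristic polynomial is the square of a real polynomial. -/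
open Polynomial Matrix

namespace Aux17

lemma exists_avoid (l : List (ℝ × ℝ)) (hl : ∀ p ∈ l, p.1 ≠ 0 ∨ p.2 ≠ 0) :
    ∃ y : ℝ, ∀ p ∈ l, p.1 * y + p.2 ≠ 0 := by
  have hfin : {x : ℝ | ∃ p ∈ l, p.1 * x + p.2 = 0}.Finite := by
    have hsub : {x : ℝ | ∃ p ∈ l, p.1 * x + p.2 = 0} ⊆
        ⋃ p ∈ {p : ℝ × ℝ | p ∈ l}, {x : ℝ | p.1 * x + p.2 = 0} := by
      intro x hx
      obtain ⟨p, hp, h⟩ := hx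
      exact Set.mem_biUnion hp h
    refine Set.Finite.subset (Set.Finite.biUnion l.finite_toSet ?_) hsub
    intro p hp
    by_cases ha : p.1 = 0
    · have hb : p.2 ≠ 0 := (hl p hp).resolve_left (by simpa using ha)
      have : {x : ℝ | p.1 * x + p.2 = 0} = ∅ := by
        ext x; simp [ha, hb]
      rw [this]; exact Set.finite_empty
    · refine Set.Finite.subset (Set.finite_singleton (-p.2 / p.1)) ?_
      intro x hx
      simp only [Set.mem_setOf_eq] at hx
      simp only [Set.mem_singleton_iff]
      field_simp
      linarith
  obtain ⟨x, hx⟩ := hfin.infinite_compl.nonempty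
  exact ⟨x, fun p hp h => hx ⟨p, hp, h⟩⟩

open scoped Classical

variable (k : ℕ) (G : SimpleGraph (Fin (k + 1))) (ρ : ℝ)

/-- real degree -/
noncomputable def degR (i : Fin (k + 1)) : ℝ := ∑ j, if G.Adj i j then (1 : ℝ) else 0

noncomputable def A1 : Matrix (Fin (k + 1)) (Fin (k + 1)) ℝ :=
  Matrix.of fun i j => if i = j then ρ - degR k G i - 1 else if G.Adj i j then 1 else 0

noncomputable def AA : Matrix (Fin (k + 1) ⊕ Fin 1) (Fin (k + 1) ⊕ Fin 1) ℝ :=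
  fromBlocks (A1 k G ρ) (Matrix.of fun _ _ => 1) (Matrix.of fun _ _ => 1) 0

noncomputable def NN :
    Matrix ((Fin (k + 1) ⊕ Fin 1) ⊕ (Fin (k + 1) ⊕ Fin 1))
      ((Fin (k + 1) ⊕ Fin 1) ⊕ (Fin (k + 1) ⊕ Fin 1)) ℝ :=
  fromBlocks (AA k G ρ) 0 0 (AA k G ρ)

noncomputable def ψ : Fin (k + 3) ≃ (Fin (k + 1) ⊕ (Fin 1 ⊕ Fin 1)) :=
  Fintype.equivOfCardEq (by simp)

noncomputable def φ :
    (Fin (k + 1) ⊕ Fin (k + 3)) ≃ ((Fin (k + 1) ⊕ Fin 1) ⊕ (Fin (k + 1) ⊕ Fin 1)) where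
  toFun := Sum.elim (fun i => .inl (.inl i))
    (fun x => Sum.elim (fun j => .inr (.inl j))
      (Sum.elim (fun o => .inl (.inr o)) (fun o => .inr (.inr o))) (ψ k x))
  invFun := Sum.elim
    (Sum.elim (fun i => .inl i) (fun o => .inr ((ψ k).symm (.inr (.inl o)))))
    (Sum.elim (fun j => .inr ((ψ k).symm (.inl j))) (fun o => .inr ((ψ k).symm (.inr (.inr o)))))
  left_inv := by
    rintro (i | x)
    · rfl
    · rcases h : ψ k x with j | (o | o) <;>
      · simp only [Sum.elim_inl, Sum.elim_inr, h]
        rw [← h, Equiv.symm_apply_apply]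
  right_inv := by
    rintro ((i | o) | (j | o)) <;> simp [Equiv.apply_symm_apply]

lemma φ_inl (i : Fin (k + 1)) : φ k (.inl i) = .inl (.inl i) := rfl

lemma φ_inr (x : Fin (k + 3)) : φ k (.inr x) =
    Sum.elim (fun j => .inr (.inl j))
      (Sum.elim (fun o => .inl (.inr o)) (fun o => .inr (.inr o))) (ψ k x) := rfl

noncomputable def N0 := (NN k G ρ).submatrix (φ k) (φ k)

noncomputable def QQ : Matrix (Fin (k + 3)) (Fin (k + 3)) ℝ :=
  Matrix.of fun x y => (if x = y then (1 : ℝ) else 0) - 2 / (k + 3)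

noncomputable def RRm : Matrix (Fin (k + 1) ⊕ Fin (k + 3)) (Fin (k + 1) ⊕ Fin (k + 3)) ℝ :=
  fromBlocks 1 0 0 (QQ k)

noncomputable def MM := RRm k * N0 k G ρ * RRm k


lemma A1_symm : (A1 k G ρ)ᵀ = A1 k G ρ := by
  ext i j
  simp only [transpose_apply, A1, Matrix.of_apply]
  by_cases h : i = j
  · simp [h]
  · rw [if_neg (fun hh => h hh.symm), if_neg h, G.adj_comm]

lemma AA_symm : (AA k G ρ)ᵀ = AA k G ρ := by
  have h1 : (Matrix.of fun (_ : Fin 1) (_ : Fin (k+1)) => (1:ℝ))ᵀ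
      = Matrix.of fun _ _ => (1:ℝ) := by ext i j; rfl
  have h2 : (Matrix.of fun (_ : Fin (k+1)) (_ : Fin 1) => (1:ℝ))ᵀ
      = Matrix.of fun _ _ => (1:ℝ) := by ext i j; rfl
  rw [AA, fromBlocks_transpose, A1_symm, h1, h2, transpose_zero]

lemma NN_symm : (NN k G ρ)ᵀ = NN k G ρ := by
  rw [NN, fromBlocks_transpose, AA_symm, transpose_zero]

lemma QQ_symm : (QQ k)ᵀ = QQ k := by
  ext i j
  simp only [transpose_apply, QQ, Matrix.of_apply]
  congr 1
  by_cases h : i = j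
  · simp [h]
  · rw [if_neg (fun hh => h hh.symm), if_neg h]

lemma RRm_symm : (RRm k)ᵀ = RRm k := by
  rw [RRm, fromBlocks_transpose, QQ_symm, transpose_zero, transpose_zero, transpose_one]

lemma MM_symm : (MM k G ρ)ᵀ = MM k G ρ := by
  rw [MM, transpose_mul, transpose_mul, RRm_symm, N0, transpose_submatrix, NN_symm, ← N0,
    Matrix.mul_assoc]

lemma QQ_mul_QQ : QQ k * QQ k = 1 := by
  have hc3 : ((k : ℝ) + 3) ≠ 0 := by positivity
  ext x y
  simp only [Matrix.mul_apply, QQ, Matrix.of_apply]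
  have hz : ∀ z : Fin (k+3), ((if x = z then (1:ℝ) else 0) - 2/(k+3)) *
      ((if z = y then (1:ℝ) else 0) - 2/(k+3)) =
      ((if x = z then (1:ℝ) else 0) * (if z = y then (1:ℝ) else 0))
        - 2/(k+3) * (if x = z then (1:ℝ) else 0)
        - 2/(k+3) * (if z = y then (1:ℝ) else 0) + (2/(k+3)) * (2/(k+3)) := by
    intro z; ring
  rw [Finset.sum_congr rfl (fun z _ => hz z)]
  rw [Finset.sum_add_distrib, Finset.sum_sub_distrib, Finset.sum_sub_distrib]
  rw [← Finset.mul_sum, ← Finset.mul_sum]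
  simp only [ite_mul, one_mul, zero_mul, Finset.sum_ite_eq, Finset.mem_univ, if_true,
    Finset.sum_ite_eq', Finset.sum_const, Finset.card_univ, Fintype.card_fin, nsmul_eq_mul]
  rw [Matrix.one_apply]
  push_cast
  by_cases hxy : x = y <;> simp only [hxy, if_true, if_false] <;> field_simp <;> ring

lemma RRm_mul_RRm : RRm k * RRm k = 1 := by
  rw [RRm, fromBlocks_multiply]
  simp only [Matrix.mul_one, Matrix.one_mul, Matrix.mul_zero, Matrix.zero_mul,
    add_zero, zero_add, QQ_mul_QQ]
  exact fromBlocks_one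

lemma charpoly_conj {ι : Type*} [Fintype ι] [DecidableEq ι] (R N : Matrix ι ι ℝ)
    (h : R * R = 1) : (R * N * R).charpoly = N.charpoly := by
  set RC := R.map (⇑(C : ℝ →+* ℝ[X])) with hRC
  have hone : RC * RC = 1 := by
    rw [hRC, ← Matrix.map_mul, h, Matrix.map_one _ (map_zero C) (map_one C)]
  have hdiag : Matrix.diagonal (fun _ : ι => (X : ℝ[X])) = (X : ℝ[X]) • (1 : Matrix ι ι ℝ[X]) := by
    ext i j; by_cases hij : i = j <;> simp [hij]
  have hcm : charmatrix (R * N * R) = RC * charmatrix N * RC := by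
    unfold charmatrix
    rw [mul_sub, sub_mul]
    congr 1
    · rw [scalar_apply, hdiag, mul_smul_comm, smul_mul_assoc, mul_one, hone]
    · simp only [RingHom.mapMatrix_apply, hRC]
      rw [← Matrix.map_mul, ← Matrix.map_mul]
  rw [Matrix.charpoly, Matrix.charpoly, hcm, det_mul, det_mul]
  have hdet : RC.det * RC.det = 1 := by rw [← det_mul, hone, det_one]
  rw [mul_comm RC.det (charmatrix N).det, mul_assoc, hdet, mul_one]

lemma MM_charpoly : (MM k G ρ).charpoly = (AA k G ρ).charpoly ^ 2 := by
  rw [MM, charpoly_conj _ _ (RRm_mul_RRm k), N0]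
  have hre : (NN k G ρ).submatrix (φ k) (φ k)
      = reindex (φ k).symm (φ k).symm (NN k G ρ) := by
    rw [reindex_apply, Equiv.symm_symm]
  rw [hre, charpoly_reindex, NN, charpoly_fromBlocks_zero₂₁, sq]


noncomputable def W : Matrix (Fin (k + 1)) (Fin 1 ⊕ Fin 1) ℝ :=
  Matrix.of fun _ w => Sum.elim (fun _ => (0 : ℝ)) (fun _ => (1 : ℝ)) w

noncomputable def P' : Matrix (Fin (k + 1) ⊕ (Fin 1 ⊕ Fin 1)) (Fin (k + 1) ⊕ (Fin 1 ⊕ Fin 1)) ℝ :=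
  fromBlocks (A1 k G ρ) (W k) (W k)ᵀ 0

lemma N0_inl_inl (i j : Fin (k + 1)) :
    N0 k G ρ (.inl i) (.inl j) = A1 k G ρ i j := by
  simp [N0, submatrix_apply, φ_inl, NN, AA]

lemma N0_inl_inr (i : Fin (k + 1)) (x : Fin (k + 3)) :
    N0 k G ρ (.inl i) (.inr x) = if x = (ψ k).symm (.inr (.inl 0)) then 1 else 0 := by
  rw [N0, submatrix_apply, φ_inl, φ_inr]
  have hcond : (x = (ψ k).symm (.inr (.inl 0))) ↔ (ψ k x = .inr (.inl 0)) :=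
    Equiv.eq_symm_apply (ψ k)
  rcases h : ψ k x with j | (o | o) <;>
    simp only [Sum.elim_inl, Sum.elim_inr]
  · rw [if_neg (fun hh => by rw [hcond, h] at hh; exact Sum.inl_ne_inr hh)]
    simp [NN]
  · have ho : o = 0 := Subsingleton.elim _ _
    rw [if_pos (by rw [hcond, h, ho])]
    simp [NN, AA]
  · rw [if_neg (fun hh => by rw [hcond, h] at hh; simpa using hh)]
    simp [NN]

lemma N0_inr_inr (x y : Fin (k + 3)) :
    N0 k G ρ (.inr x) (.inr y) = P' k G ρ (ψ k x) (ψ k y) := by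
  rw [N0, submatrix_apply, φ_inr, φ_inr]
  rcases hx : ψ k x with j | (o | o) <;> rcases hy : ψ k y with l | (o' | o') <;>
    simp [NN, AA, P', W]

lemma P'_symm : (P' k G ρ)ᵀ = P' k G ρ := by
  rw [P', fromBlocks_transpose, A1_symm, transpose_transpose, transpose_zero]

noncomputable def rowP : (Fin (k + 1) ⊕ (Fin 1 ⊕ Fin 1)) → ℝ :=
  Sum.elim (fun _ => ρ) (Sum.elim (fun _ => 0) (fun _ => (k + 1 : ℝ)))

lemma sum_A1_row (j : Fin (k + 1)) : ∑ l, A1 k G ρ j l = ρ - 1 := by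
  have hsplit : ∀ l, A1 k G ρ j l =
      (if j = l then ρ - degR k G j - 1 else 0) + (if G.Adj j l then 1 else 0) := by
    intro l
    rw [A1, Matrix.of_apply]
    by_cases h : j = l
    · subst h; simp [SimpleGraph.irrefl]
    · simp [h]
  rw [Finset.sum_congr rfl (fun l _ => hsplit l), Finset.sum_add_distrib]
  rw [Finset.sum_ite_eq, if_pos (Finset.mem_univ j)]
  have : ∑ l, (if G.Adj j l then (1:ℝ) else 0) = degR k G j := rfl
  rw [this]
  ring

lemma row_sum_P' (z : Fin (k + 1) ⊕ (Fin 1 ⊕ Fin 1)) :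
    ∑ w, P' k G ρ z w = rowP k ρ z := by
  rcases z with j | (o | o)
  · rw [Fintype.sum_sum_type]
    simp only [P', fromBlocks_apply₁₁, fromBlocks_apply₁₂]
    rw [sum_A1_row]
    rw [Fintype.sum_sum_type]
    simp [W, rowP]
  · rw [Fintype.sum_sum_type]
    simp [P', W, rowP]
  · rw [Fintype.sum_sum_type]
    simp [P', W, rowP]

lemma col_sum_P' (w : Fin (k + 1) ⊕ (Fin 1 ⊕ Fin 1)) :
    ∑ z, P' k G ρ z w = rowP k ρ w := by
  have he : ∀ z, P' k G ρ z w = P' k G ρ w z := by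
    intro z
    conv_lhs => rw [← P'_symm k G ρ]
    rfl
  rw [Finset.sum_congr rfl (fun z _ => he z)]
  exact row_sum_P' k G ρ w

lemma total_sum_rowP : ∑ z, rowP k ρ z = (k + 1 : ℝ) * (ρ + 1) := by
  rw [Fintype.sum_sum_type, Fintype.sum_sum_type]
  simp [rowP, Finset.sum_const, Finset.card_univ]
  ring


lemma MM_eq_blocks : MM k G ρ = fromBlocks ((N0 k G ρ).toBlocks₁₁)
    ((N0 k G ρ).toBlocks₁₂ * QQ k) (QQ k * (N0 k G ρ).toBlocks₂₁)
    (QQ k * (N0 k G ρ).toBlocks₂₂ * QQ k) := by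
  conv_lhs => rw [MM, ← fromBlocks_toBlocks (N0 k G ρ), RRm]
  rw [fromBlocks_multiply, fromBlocks_multiply]
  simp only [Matrix.mul_one, Matrix.one_mul, Matrix.mul_zero, Matrix.zero_mul,
    add_zero, zero_add, Matrix.mul_assoc]

lemma sum_mul_QQ (f : Fin (k + 3) → ℝ) (y : Fin (k + 3)) :
    ∑ b, f b * QQ k b y = f y - 2 / (k + 3) * ∑ b, f b := by
  have h : ∀ b, f b * QQ k b y = (if b = y then f b else 0) - 2 / (k + 3) * f b := by
    intro b
    simp only [QQ, Matrix.of_apply]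
    split_ifs <;> ring
  rw [Finset.sum_congr rfl fun b _ => h b, Finset.sum_sub_distrib, Finset.sum_ite_eq',
    if_pos (Finset.mem_univ y), ← Finset.mul_sum]

lemma QQ_mul_sum (f : Fin (k + 3) → ℝ) (x : Fin (k + 3)) :
    ∑ a, QQ k x a * f a = f x - 2 / (k + 3) * ∑ a, f a := by
  have h : ∀ a, QQ k x a * f a = (if x = a then f a else 0) - 2 / (k + 3) * f a := by
    intro a
    simp only [QQ, Matrix.of_apply]
    split_ifs <;> ring
  rw [Finset.sum_congr rfl fun a _ => h a, Finset.sum_sub_distrib, Finset.sum_ite_eq,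
    if_pos (Finset.mem_univ x), ← Finset.mul_sum]

lemma MM_inl_inl (i j : Fin (k + 1)) :
    MM k G ρ (.inl i) (.inl j) = A1 k G ρ i j := by
  rw [MM_eq_blocks]
  exact N0_inl_inl k G ρ i j

lemma MM_inl_inr (i : Fin (k + 1)) (y : Fin (k + 3)) :
    MM k G ρ (.inl i) (.inr y) =
      (if y = (ψ k).symm (.inr (.inl 0)) then 1 else 0) - 2 / (k + 3) := by
  rw [MM_eq_blocks]
  show ((N0 k G ρ).toBlocks₁₂ * QQ k) i y = _
  rw [Matrix.mul_apply]
  have hb : ∀ b, (N0 k G ρ).toBlocks₁₂ i b = if b = (ψ k).symm (.inr (.inl 0)) then 1 else 0 :=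
    fun b => N0_inl_inr k G ρ i b
  rw [Finset.sum_congr rfl fun b _ => by rw [hb b],
    sum_mul_QQ k (fun b => if b = (ψ k).symm (.inr (.inl 0)) then (1:ℝ) else 0)]
  rw [Finset.sum_ite_eq', if_pos (Finset.mem_univ _)]
  ring

lemma MM_inr_inr (x y : Fin (k + 3)) :
    MM k G ρ (.inr x) (.inr y) =
      P' k G ρ (ψ k x) (ψ k y)
        - 2 / (k + 3) * (rowP k ρ (ψ k x) + rowP k ρ (ψ k y))
        + 2 / (k + 3) * (2 / (k + 3)) * ((k + 1 : ℝ) * (ρ + 1)) := by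
  rw [MM_eq_blocks]
  show (QQ k * (N0 k G ρ).toBlocks₂₂ * QQ k) x y = _
  rw [Matrix.mul_assoc, Matrix.mul_apply]
  have hB : ∀ a b, (N0 k G ρ).toBlocks₂₂ a b = P' k G ρ (ψ k a) (ψ k b) :=
    fun a b => N0_inr_inr k G ρ a b
  have hinner : ∀ a, ((N0 k G ρ).toBlocks₂₂ * QQ k) a y =
      P' k G ρ (ψ k a) (ψ k y) - 2 / (k + 3) * rowP k ρ (ψ k a) := by
    intro a
    rw [Matrix.mul_apply, Finset.sum_congr rfl fun b _ => by rw [hB a b],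
      sum_mul_QQ k (fun b => P' k G ρ (ψ k a) (ψ k b)) y]
    congr 1
    rw [Equiv.sum_comp (ψ k) (fun w => P' k G ρ (ψ k a) w), row_sum_P']
  rw [Finset.sum_congr rfl fun a _ => by rw [hinner a],
    QQ_mul_sum k (fun a => P' k G ρ (ψ k a) (ψ k y) - 2 / (k + 3) * rowP k ρ (ψ k a)) x]
  rw [Finset.sum_sub_distrib, ← Finset.mul_sum,
    Equiv.sum_comp (ψ k) (fun z => P' k G ρ z (ψ k y)),
    Equiv.sum_comp (ψ k) (rowP k ρ), col_sum_P', total_sum_rowP]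
  ring


theorem main (k : ℕ) (G : SimpleGraph (Fin (k + 1))) :
    ∃ M : Matrix (Fin (k + 1) ⊕ Fin (k + 3)) (Fin (k + 1) ⊕ Fin (k + 3)) ℝ, M.IsSymm ∧
      (∀ i j : Fin (k + 1), i ≠ j → (M (Sum.inl i) (Sum.inl j) ≠ 0 ↔ G.Adj i j)) ∧
      (∀ (i : Fin (k + 1)) (j : Fin (k + 3)), M (Sum.inl i) (Sum.inr j) ≠ 0) ∧
      (∀ i j : Fin (k + 3), i ≠ j → M (Sum.inr i) (Sum.inr j) ≠ 0) ∧
      ∃ g : Polynomial ℝ, M.charpoly = g ^ 2 := by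
  have hkpos : (0 : ℝ) < (k : ℝ) + 3 := by positivity
  set c : ℝ := 2 / ((k : ℝ) + 3) with hc
  set m' : ℝ := (k : ℝ) + 1 with hm'
  have hc0 : 0 < c := by rw [hc]; positivity
  have hc1 : c < 1 := by
    rw [hc, div_lt_one hkpos]
    have : (0:ℝ) ≤ (k:ℝ) := Nat.cast_nonneg k
    linarith
  have hm'0 : 0 < m' := by rw [hm']; positivity
  have hcm2 : c * m' < 2 := by
    rw [hc, hm', div_mul_eq_mul_div, div_lt_iff₀ hkpos]
    have : (0:ℝ) ≤ (k:ℝ) := Nat.cast_nonneg k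
    nlinarith
  obtain ⟨ρ, hρ⟩ := exists_avoid
    [(c * c * m' - 2 * c, c * c * m'), (c * c * m' - 2 * c, c * c * m' + 1),
     (c * c * m' - c, c * c * m'), (c * c * m' - c, c * c * m' - c * m' + 1),
     (c * c * m', c * c * m' - c * m')]
    (by
      intro p hp
      simp only [List.mem_cons, List.not_mem_nil, or_false] at hp
      rcases hp with rfl | rfl | rfl | rfl | rfl <;> dsimp only
      · left; nlinarith
      · left; nlinarith
      · right; positivity
      · by_cases h : c * m' = 1
        · right
          intro habs
          have : c * c * m' = c := by rw [mul_assoc, h, mul_one]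
          rw [this, h] at habs
          linarith
        · left
          have : c * c * m' - c = c * (c * m' - 1) := by ring
          rw [this]
          exact mul_ne_zero hc0.ne' (sub_ne_zero.2 h)
      · left; positivity)
  have C1 : (c * c * m' - 2 * c) * ρ + c * c * m' ≠ 0 := hρ (c * c * m' - 2 * c, c * c * m') (by simp)
  have C2 : (c * c * m' - 2 * c) * ρ + (c * c * m' + 1) ≠ 0 := hρ (c * c * m' - 2 * c, c * c * m' + 1) (by simp)
  have C3 : (c * c * m' - c) * ρ + c * c * m' ≠ 0 := hρ (c * c * m' - c, c * c * m') (by simp)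
  have C4 : (c * c * m' - c) * ρ + (c * c * m' - c * m' + 1) ≠ 0 := hρ (c * c * m' - c, c * c * m' - c * m' + 1) (by simp)
  have C5 : c * c * m' * ρ + (c * c * m' - c * m') ≠ 0 := hρ (c * c * m', c * c * m' - c * m') (by simp)
  refine ⟨MM k G ρ, MM_symm k G ρ, ?_, ?_, ?_, (AA k G ρ).charpoly, MM_charpoly k G ρ⟩
  · intro i j hij
    rw [MM_inl_inl, A1, Matrix.of_apply, if_neg hij]
    by_cases hadj : G.Adj i j <;> simp [hadj]
  · intro i j
    rw [MM_inl_inr, ← hc]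
    by_cases h : j = (ψ k).symm (.inr (.inl 0))
    · rw [if_pos h]
      intro habs; exact absurd (by linarith : c = 1) hc1.ne
    · rw [if_neg h]
      intro habs; exact absurd (by linarith : c = 0) hc0.ne'
  · intro x y hxy
    have hψne : ψ k x ≠ ψ k y := fun h => hxy ((ψ k).injective h)
    rw [MM_inr_inr, ← hc, ← hm']
    rcases hx : ψ k x with j | (o | o) <;> rcases hy : ψ k y with l | (o' | o') <;>
      rw [hx, hy] at hψne
    · -- both G-part
      have hjl : j ≠ l := fun h => hψne (by rw [h])
      simp only [P', fromBlocks_apply₁₁, rowP, Sum.elim_inl]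
      rw [A1, Matrix.of_apply, if_neg hjl]
      by_cases hadj : G.Adj j l
      · rw [if_pos hadj]
        intro habs; exact C2 (by linear_combination habs)
      · rw [if_neg hadj]
        intro habs; exact C1 (by linear_combination habs)
    · simp only [P', fromBlocks_apply₁₂, W, Matrix.of_apply, Sum.elim_inl, rowP, Sum.elim_inr]
      intro habs; exact C3 (by linear_combination habs)
    · simp only [P', fromBlocks_apply₁₂, W, Matrix.of_apply, Sum.elim_inr, rowP, Sum.elim_inl]
      intro habs; exact C4 (by linear_combination habs)
    · simp only [P', fromBlocks_apply₂₁, transpose_apply, W, Matrix.of_apply, Sum.elim_inl,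
        rowP, Sum.elim_inr]
      intro habs; exact C3 (by linear_combination habs)
    · exact absurd (by rw [Subsingleton.elim o o']) hψne
    · simp only [P', fromBlocks_apply₂₂, Matrix.zero_apply, rowP, Sum.elim_inr, Sum.elim_inl]
      intro habs; exact C5 (by linear_combination habs)
    · simp only [P', fromBlocks_apply₂₁, transpose_apply, W, Matrix.of_apply, Sum.elim_inr,
        rowP, Sum.elim_inl]
      intro habs; exact C4 (by linear_combination habs)
    · simp only [P', fromBlocks_apply₂₂, Matrix.zero_apply, rowP, Sum.elim_inr, Sum.elim_inl]
      intro habs; exact C5 (by linear_combination habs)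
    · exact absurd (by rw [Subsingleton.elim o o']) hψne

end Aux17

theorem stmt_17 (n : ℕ) (hn : 2 ≤ n) (G : SimpleGraph (Fin (n - 1))) :
    ∃ M : Matrix (Fin (n - 1) ⊕ Fin (n + 1)) (Fin (n - 1) ⊕ Fin (n + 1)) ℝ, M.IsSymm ∧
      (∀ i j : Fin (n - 1), i ≠ j → (M (Sum.inl i) (Sum.inl j) ≠ 0 ↔ G.Adj i j)) ∧
      (∀ (i : Fin (n - 1)) (j : Fin (n + 1)), M (Sum.inl i) (Sum.inr j) ≠ 0) ∧
      (∀ i j : Fin (n + 1), i ≠ j → M (Sum.inr i) (Sum.inr j) ≠ 0) ∧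
      ∃ g : Polynomial ℝ, M.charpoly = g ^ 2 := by
  obtain ⟨k, rfl⟩ : ∃ k, n = k + 2 := ⟨n - 2, by omega⟩
  exact Aux17.main k G
end
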